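/- arXiv:0809.2178 — 5 statements merged into one kernel-verified Lean document; each statement's English description precedes it below -/
import Mathlib

section
/- Let A be an n×n upper triangular matrix over Z/2 with zero diagonal entries, and let H = (Z/2)[x_1,...,x_n]/(x_j^2 = x_j·Σ_i A^i_j x_i, j=1,...,n) be the associated graded ring. Then the monomials x_{i_1}···x_{i_q} with 1 ≤ i_1 < ··· < i_q ≤ n form a basis of the degree-q part H^q as a Z/2-vector space; in particular dim_{Z/2} H^q = C(n,q). -/
open MvPolynomial

/-- Strictly upper triangular matrix (zero diagonal, zero below diagonal);
membership in `𝔅(n)`. -/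
def IsUpperTri {n : ℕ} (A : Matrix (Fin n) (Fin n) (ZMod 2)) : Prop :=
  ∀ i j : Fin n, j ≤ i → A i j = 0

/-- The defining ideal `(x_j^2 - x_j Σ_i A^i_j x_i)`. -/
noncomputable def bottIdeal {n : ℕ} (A : Matrix (Fin n) (Fin n) (ZMod 2)) :
    Ideal (MvPolynomial (Fin n) (ZMod 2)) :=
  Ideal.span (Set.range fun j : Fin n => X j ^ 2 - X j * ∑ i : Fin n, C (A i j) * X i)

/-- The Bott ring `H = (Z/2)[x_1,...,x_n]/(x_j^2 = x_j Σ_i A^i_j x_i)` presented by `A`. -/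
abbrev BottRing {n : ℕ} (A : Matrix (Fin n) (Fin n) (ZMod 2)) : Type :=
  MvPolynomial (Fin n) (ZMod 2) ⧸ bottIdeal A

/-- The canonical degree-one generators `x_j`. -/
noncomputable def bx {n : ℕ} (A : Matrix (Fin n) (Fin n) (ZMod 2)) (j : Fin n) : BottRing A :=
  Ideal.Quotient.mk (bottIdeal A) (X j)

/-- The degree-one part `H^1` of the Bott ring (the span of `x_1,...,x_n`). -/
noncomputable def deg1 {n : ℕ} (A : Matrix (Fin n) (Fin n) (ZMod 2)) :
    Submodule (ZMod 2) (BottRing A) :=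
  Submodule.span (ZMod 2) (Set.range (bx A))

/-- The eigen-elements `α_j = Σ_i A^i_j x_i`. -/
noncomputable def alphaEl {n : ℕ} (A : Matrix (Fin n) (Fin n) (ZMod 2)) (j : Fin n) :
    BottRing A :=
  ∑ i : Fin n, A i j • bx A i

/-- The degree-`q` part of the Bott ring: the image of homogeneous polynomials of degree `q`. -/
noncomputable def degq {n : ℕ} (A : Matrix (Fin n) (Fin n) (ZMod 2)) (q : ℕ) :
    Submodule (ZMod 2) (BottRing A) :=
  Submodule.span (ZMod 2)
    ((Ideal.Quotient.mk (bottIdeal A)) ''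
      {p : MvPolynomial (Fin n) (ZMod 2) | p.IsHomogeneous q})

namespace BottAux

open Finsupp

variable {n : ℕ} (A : Matrix (Fin n) (Fin n) (ZMod 2))

/-- A fuelled normal-form function sending a monomial exponent to a combination of
square-free monomials (represented as finitely supported functions on finsets). -/
noncomputable def NFfuel : ℕ → (Fin n →₀ ℕ) → (Finset (Fin n) →₀ ZMod 2)
  | 0, m => Finsupp.single m.support 1
  | (k+1), m =>
    if h : ∃ j, 2 ≤ m j then
      ∑ i : Fin n, A i h.choose •
        NFfuel k (m - Finsupp.single h.choose 1 + Finsupp.single i 1)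
    else Finsupp.single m.support 1

variable {A}

lemma lt_of_A_ne (hA : IsUpperTri A) {i j : Fin n} (h : A i j ≠ 0) : i < j := by
  by_contra hc
  exact h (hA i j (le_of_not_gt hc))

/-- The 2-adic weight of an exponent vector; reduction strictly decreases it. -/
def wt (m : Fin n →₀ ℕ) : ℕ := ∑ j : Fin n, m j * 2 ^ (j : ℕ)

lemma wt_add (f g : Fin n →₀ ℕ) : wt (f + g) = wt f + wt g := by
  simp [wt, add_mul, Finset.sum_add_distrib]

lemma wt_single (i : Fin n) : wt (Finsupp.single i 1) = 2 ^ (i : ℕ) := by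
  rw [wt, Finset.sum_eq_single i] <;> simp [Finsupp.single_apply]
  intro j hj; simp [Finsupp.single_apply, Ne.symm hj]

lemma sub_add_single (m : Fin n →₀ ℕ) (j : Fin n) (h : 1 ≤ m j) :
    m - Finsupp.single j 1 + Finsupp.single j 1 = m := by
  ext a
  simp only [Finsupp.coe_add, Finsupp.coe_tsub, Pi.add_apply, Pi.sub_apply,
    Finsupp.single_apply]
  split_ifs with hja
  · subst hja; omega
  · omega

lemma wt_red {m : Fin n →₀ ℕ} {i j : Fin n} (hij : i < j) (h : 1 ≤ m j) :
    wt (m - Finsupp.single j 1 + Finsupp.single i 1) < wt m := by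
  have key : wt (m - Finsupp.single j 1 + Finsupp.single i 1) + 2 ^ (j : ℕ)
      = wt m + 2 ^ (i : ℕ) := by
    rw [← wt_single (n := n) j, ← wt_single (n := n) i, ← wt_add, ← wt_add]
    congr 1
    rw [add_right_comm, sub_add_single m j h]
  have hpow : (2:ℕ) ^ (i : ℕ) < 2 ^ (j : ℕ) := Nat.pow_lt_pow_right one_lt_two hij
  omega

lemma two_le_wt {m : Fin n →₀ ℕ} {j : Fin n} (h : 2 ≤ m j) : 2 ≤ wt m := by
  have h1 : m j * 2 ^ (j : ℕ) ≤ wt m :=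
    Finset.single_le_sum (f := fun j => m j * 2 ^ (j:ℕ)) (fun _ _ => Nat.zero_le _)
      (Finset.mem_univ j)
  have h2 : 2 ≤ m j * 2 ^ (j : ℕ) :=
    le_trans (by omega) (Nat.le_mul_of_pos_right _ (by positivity))
  omega

lemma NFfuel_stab (hA : IsUpperTri A) :
    ∀ k, ∀ (m : Fin n →₀ ℕ) k', wt m ≤ k → wt m ≤ k' → NFfuel A k m = NFfuel A k' m := by
  intro k
  induction k using Nat.strong_induction_on with
  | _ k IH =>
    intro m k' hk hk'
    by_cases h : ∃ j, 2 ≤ m j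
    · have h2 : 2 ≤ wt m := two_le_wt h.choose_spec
      obtain ⟨a, rfl⟩ : ∃ a, k = a + 1 := ⟨k - 1, by omega⟩
      obtain ⟨b, rfl⟩ : ∃ b, k' = b + 1 := ⟨k' - 1, by omega⟩
      simp only [NFfuel, dif_pos h]
      refine Finset.sum_congr rfl fun i _ => ?_
      by_cases hz : A i h.choose = 0
      · simp [hz]
      · have hij : i < h.choose := lt_of_A_ne hA hz
        have hw : wt (m - Finsupp.single h.choose 1 + Finsupp.single i 1) < wt m :=
          wt_red hij (le_trans one_le_two h.choose_spec)
        rw [IH a (by omega) _ b (by omega) (by omega)]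
    · cases k <;> cases k' <;> simp only [NFfuel, dif_neg h]

/-- The normal form of a monomial exponent. -/
noncomputable def NFs (A : Matrix (Fin n) (Fin n) (ZMod 2)) (m : Fin n →₀ ℕ) :
    Finset (Fin n) →₀ ZMod 2 := NFfuel A (wt m) m

lemma NFfuel_eq_NFs (hA : IsUpperTri A) {m : Fin n →₀ ℕ} {k : ℕ} (hk : wt m ≤ k) :
    NFfuel A k m = NFs A m :=
  NFfuel_stab hA k m (wt m) hk le_rfl

lemma NFs_squarefree {m : Fin n →₀ ℕ} (hsf : ∀ j, m j ≤ 1) :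
    NFs A m = Finsupp.single m.support 1 := by
  have h : ¬ ∃ j, 2 ≤ m j := by
    rintro ⟨j, hj⟩; exact absurd (hsf j) (by omega)
  rw [NFs]
  cases a : wt m <;> simp only [NFfuel, dif_neg h]

lemma NFs_unfold (hA : IsUpperTri A) {m : Fin n →₀ ℕ} (h : ∃ j, 2 ≤ m j) :
    NFs A m = ∑ i : Fin n, A i h.choose •
      NFs A (m - Finsupp.single h.choose 1 + Finsupp.single i 1) := by
  have h2 : 2 ≤ wt m := two_le_wt h.choose_spec
  obtain ⟨a, ha⟩ : ∃ a, wt m = a + 1 := ⟨wt m - 1, by omega⟩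
  rw [NFs, ha]
  simp only [NFfuel, dif_pos h]
  refine Finset.sum_congr rfl fun i _ => ?_
  by_cases hz : A i h.choose = 0
  · simp [hz]
  · have hij : i < h.choose := lt_of_A_ne hA hz
    have hw : wt (m - Finsupp.single h.choose 1 + Finsupp.single i 1) < wt m :=
      wt_red hij (le_trans one_le_two h.choose_spec)
    rw [NFfuel_eq_NFs hA (by omega)]

lemma swap_red {m : Fin n →₀ ℕ} {j j0 i i' : Fin n} (hjj : j ≠ j0)
    (hmj : 2 ≤ m j) (hmj0 : 2 ≤ m j0) :
    m - single j0 1 + single i 1 - single j 1 + single i' 1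
      = m - single j 1 + single i' 1 - single j0 1 + single i 1 := by
  ext a
  simp only [Finsupp.coe_add, Finsupp.coe_tsub, Pi.add_apply, Pi.sub_apply,
    Finsupp.single_apply]
  rcases eq_or_ne j a with rfl | h1
  · rw [if_neg (fun h : j0 = j => hjj h.symm)]
    split_ifs <;> omega
  · rcases eq_or_ne j0 a with rfl | h2
    · rw [if_neg h1]
      split_ifs <;> omega
    · rw [if_neg h1, if_neg h2]
      split_ifs <;> omega

lemma apply_red {m : Fin n →₀ ℕ} {j j0 i : Fin n} (hjj : j ≠ j0) (hmj : 2 ≤ m j) :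
    2 ≤ (m - single j0 1 + single i 1 : Fin n →₀ ℕ) j := by
  simp only [Finsupp.coe_add, Finsupp.coe_tsub, Pi.add_apply, Pi.sub_apply,
    Finsupp.single_apply, if_neg (fun h : j0 = j => hjj h.symm)]
  split_ifs <;> omega

/-- The key confluence (diamond) lemma: the normal form satisfies the reduction identity
at every position with exponent at least 2 (not only at the chosen one). -/
lemma NFs_rel (hA : IsUpperTri A) :
    ∀ k (m : Fin n →₀ ℕ) (j : Fin n), wt m ≤ k → 2 ≤ m j →
      NFs A m = ∑ i : Fin n, A i j •
        NFs A (m - Finsupp.single j 1 + Finsupp.single i 1) := by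
  intro k
  induction k using Nat.strong_induction_on with
  | _ k IH =>
  intro m j hk hmj
  have h : ∃ j, 2 ≤ m j := ⟨j, hmj⟩
  have hj0s : 2 ≤ m h.choose := h.choose_spec
  set j0 := h.choose with hj0
  by_cases hjj : j = j0
  · rw [NFs_unfold hA h, ← hj0, ← hjj]
  · have h2k : 2 ≤ k := le_trans (two_le_wt hmj) hk
    rw [NFs_unfold hA h, ← hj0]
    have step1 : ∀ i : Fin n, A i j0 •
        NFs A (m - single j0 1 + single i 1)
        = ∑ i' : Fin n, (A i j0 * A i' j) •
            NFs A (m - single j0 1 + single i 1 - single j 1 + single i' 1) := by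
      intro i
      by_cases hz : A i j0 = 0
      · simp [hz]
      · have hij : i < j0 := lt_of_A_ne hA hz
        have hwlt : wt (m - single j0 1 + single i 1) < wt m := wt_red hij (by omega)
        rw [IH (k-1) (by omega) _ j (by omega) (apply_red hjj hmj), Finset.smul_sum]
        exact Finset.sum_congr rfl fun i' _ => by rw [smul_smul]
    have step2 : ∀ i' : Fin n, A i' j •
        NFs A (m - single j 1 + single i' 1)
        = ∑ i : Fin n, (A i' j * A i j0) •
            NFs A (m - single j 1 + single i' 1 - single j0 1 + single i 1) := by
      intro i'
      by_cases hz : A i' j = 0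
      · simp [hz]
      · have hij : i' < j := lt_of_A_ne hA hz
        have hwlt : wt (m - single j 1 + single i' 1) < wt m := wt_red hij (by omega)
        rw [IH (k-1) (by omega) _ j0 (by omega)
          (apply_red (fun hh => hjj hh.symm) hj0s), Finset.smul_sum]
        exact Finset.sum_congr rfl fun i _ => by rw [smul_smul]
    calc ∑ i : Fin n, A i j0 • NFs A (m - single j0 1 + single i 1)
        = ∑ i : Fin n, ∑ i' : Fin n, (A i j0 * A i' j) •
            NFs A (m - single j0 1 + single i 1 - single j 1 + single i' 1) :=
          Finset.sum_congr rfl fun i _ => step1 i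
      _ = ∑ i' : Fin n, ∑ i : Fin n, (A i' j * A i j0) •
            NFs A (m - single j 1 + single i' 1 - single j0 1 + single i 1) := by
          rw [Finset.sum_comm]
          refine Finset.sum_congr rfl fun i _ => Finset.sum_congr rfl fun i' _ => ?_
          rw [mul_comm, swap_red hjj hmj hj0s]
      _ = ∑ i' : Fin n, A i' j • NFs A (m - single j 1 + single i' 1) :=
          (Finset.sum_congr rfl fun i' _ => (step2 i').symm)

/-- The linear extension of the normal form to polynomials. -/
noncomputable def Phi (A : Matrix (Fin n) (Fin n) (ZMod 2)) :
    MvPolynomial (Fin n) (ZMod 2) →ₗ[ZMod 2] (Finset (Fin n) →₀ ZMod 2) :=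
  (MvPolynomial.basisMonomials (Fin n) (ZMod 2)).constr ℕ (NFs A)

lemma Phi_monomial (m : Fin n →₀ ℕ) (c : ZMod 2) :
    Phi A (monomial m c) = c • NFs A m := by
  have h1 : Phi A (monomial m 1) = NFs A m := by
    have h := (MvPolynomial.basisMonomials (Fin n) (ZMod 2)).constr_basis ℕ (NFs A) m
    rwa [show (MvPolynomial.basisMonomials (Fin n) (ZMod 2)) m = monomial m 1 from
      congrFun (MvPolynomial.coe_basisMonomials (Fin n) (ZMod 2)) m] at h
  have h2 : (monomial m c : MvPolynomial (Fin n) (ZMod 2)) = c • monomial m 1 := by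
    rw [MvPolynomial.smul_monomial, smul_eq_mul, mul_one]
  rw [h2, map_smul, h1]

lemma single_two (j : Fin n) :
    Finsupp.single j 2 = Finsupp.single j 1 + Finsupp.single j 1 := by
  rw [← Finsupp.single_add]

/-- Expansion of a multiple of a defining relation into monomials. -/
lemma mul_rel_expand (m : Fin n →₀ ℕ) (j : Fin n) :
    (monomial m 1 : MvPolynomial (Fin n) (ZMod 2)) *
        (X j ^ 2 - X j * ∑ i : Fin n, C (A i j) * X i)
      = monomial (m + Finsupp.single j 1 + Finsupp.single j 1) 1
        - ∑ i : Fin n, monomial (m + Finsupp.single j 1 + Finsupp.single i 1) (A i j) := by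
  rw [mul_sub]
  congr 1
  · rw [X_pow_eq_monomial, monomial_mul, mul_one, single_two, add_assoc]
  · rw [Finset.mul_sum, Finset.mul_sum]
    refine Finset.sum_congr rfl fun i _ => ?_
    have hX : ∀ a : Fin n, (X a : MvPolynomial (Fin n) (ZMod 2)) = monomial (Finsupp.single a 1) 1 := by
      intro a
      rw [← pow_one (X a : MvPolynomial (Fin n) (ZMod 2)), X_pow_eq_monomial]
    rw [hX j, hX i, C_mul_monomial, monomial_mul, monomial_mul]
    simp [add_assoc]

lemma sub_add_cancel_two {m : Fin n →₀ ℕ} {j i : Fin n} :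
    m + Finsupp.single j 1 + Finsupp.single j 1 - Finsupp.single j 1 + Finsupp.single i 1
      = m + Finsupp.single j 1 + Finsupp.single i 1 := by
  ext a
  simp only [Finsupp.coe_add, Finsupp.coe_tsub, Pi.add_apply, Pi.sub_apply,
    Finsupp.single_apply]
  split_ifs <;> omega

lemma Phi_rel (hA : IsUpperTri A) (m : Fin n →₀ ℕ) (j : Fin n) :
    Phi A (monomial m 1 * (X j ^ 2 - X j * ∑ i : Fin n, C (A i j) * X i)) = 0 := by
  rw [mul_rel_expand, map_sub, map_sum]
  simp only [Phi_monomial, one_smul]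
  rw [sub_eq_zero]
  have hm : 2 ≤ (m + Finsupp.single j 1 + Finsupp.single j 1 : Fin n →₀ ℕ) j := by
    simp [Finsupp.single_apply]
  rw [NFs_rel hA (wt (m + Finsupp.single j 1 + Finsupp.single j 1)) _ j le_rfl hm]
  exact Finset.sum_congr rfl fun i _ => by rw [sub_add_cancel_two]

lemma Phi_ideal (hA : IsUpperTri A) {p : MvPolynomial (Fin n) (ZMod 2)}
    (hp : p ∈ bottIdeal A) : Phi A p = 0 := by
  have main : ∀ g : MvPolynomial (Fin n) (ZMod 2), Phi A (g * p) = 0 := by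
    refine Submodule.span_induction ?_ ?_ ?_ ?_ hp
    · rintro _ ⟨j, rfl⟩ g
      induction g using MvPolynomial.induction_on' with
      | monomial m c =>
        rw [show (monomial m c : MvPolynomial (Fin n) (ZMod 2)) = c • monomial m 1 by
            rw [MvPolynomial.smul_monomial, smul_eq_mul, mul_one],
          smul_mul_assoc, map_smul, Phi_rel hA m j, smul_zero]
      | add p q hp hq => rw [add_mul, map_add, hp, hq, add_zero]
    · intro g; rw [mul_zero, map_zero]
    · intro x y _ _ hx hy g; rw [mul_add, map_add, hx, hy, add_zero]
    · intro r x _ hx g; rw [smul_eq_mul, ← mul_assoc, hx]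
  simpa using main 1

/-- The exponent vector of a square-free monomial with support `s`. -/
noncomputable def indF (s : Finset (Fin n)) : Fin n →₀ ℕ := ∑ i ∈ s, Finsupp.single i 1

lemma indF_apply (s : Finset (Fin n)) (a : Fin n) :
    indF s a = if a ∈ s then 1 else 0 := by
  rw [indF, Finset.sum_apply']
  simp only [Finsupp.single_apply]
  rw [Finset.sum_ite_eq' s a (fun _ => 1)]

lemma indF_sf (s : Finset (Fin n)) (j : Fin n) : indF s j ≤ 1 := by
  rw [indF_apply]; split_ifs <;> omega

lemma indF_support (s : Finset (Fin n)) : (indF s).support = s := by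
  ext a
  simp [Finsupp.mem_support_iff, indF_apply]

lemma monomial_indF (s : Finset (Fin n)) :
    (monomial (indF s) 1 : MvPolynomial (Fin n) (ZMod 2)) = ∏ i ∈ s, X i := by
  rw [← MvPolynomial.prod_X_pow_eq_monomial, indF_support]
  refine Finset.prod_congr rfl fun i hi => ?_
  rw [indF_apply, if_pos hi, pow_one]

lemma monomial_squarefree {m : Fin n →₀ ℕ} (hsf : ∀ j, m j ≤ 1) : m = indF m.support := by
  ext a
  rw [indF_apply]
  split_ifs with h
  · have := Finsupp.mem_support_iff.mp h
    have := hsf a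
    omega
  · exact Finsupp.notMem_support_iff.mp h

/-- degree (sum of exponents) -/
def dsum (m : Fin n →₀ ℕ) : ℕ := ∑ j : Fin n, m j

lemma dsum_red {m : Fin n →₀ ℕ} {i j : Fin n} (h : 1 ≤ m j) :
    dsum (m - Finsupp.single j 1 + Finsupp.single i 1) = dsum m := by
  have key : ∀ f g : Fin n →₀ ℕ, dsum (f + g) = dsum f + dsum g := by
    intro f g; simp [dsum, Finset.sum_add_distrib]
  have hs : ∀ a : Fin n, dsum (Finsupp.single a 1 : Fin n →₀ ℕ) = 1 := by
    intro a
    rw [dsum, Finset.sum_eq_single a] <;> simp [Finsupp.single_apply]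
    intro j hj; simp [Finsupp.single_apply, Ne.symm hj]
  have : dsum (m - Finsupp.single j 1 + Finsupp.single i 1) + 1
      = dsum m + 1 := by
    calc dsum (m - Finsupp.single j 1 + Finsupp.single i 1) + 1
        = dsum (m - Finsupp.single j 1 + Finsupp.single i 1) + dsum (Finsupp.single j 1) := by
          rw [hs]
      _ = dsum (m - Finsupp.single j 1 + Finsupp.single i 1 + Finsupp.single j 1) :=
          (key _ _).symm
      _ = dsum (m - Finsupp.single j 1 + Finsupp.single j 1 + Finsupp.single i 1) := by
          rw [add_right_comm]
      _ = dsum (m + Finsupp.single i 1) := by rw [sub_add_single m j h]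
      _ = dsum m + 1 := by rw [key, hs]
  omega

lemma dsum_squarefree_card {m : Fin n →₀ ℕ} (hsf : ∀ j, m j ≤ 1) :
    m.support.card = dsum m := by
  rw [dsum, ← Finset.sum_subset (Finset.subset_univ m.support)
    (fun x _ hx => Finsupp.notMem_support_iff.mp hx)]
  rw [Finset.card_eq_sum_ones]
  refine Finset.sum_congr rfl fun a ha => ?_
  have h1 := Finsupp.mem_support_iff.mp ha
  have h2 := hsf a
  omega

lemma mk_smul (a : ZMod 2) (p : MvPolynomial (Fin n) (ZMod 2)) :
    Ideal.Quotient.mk (bottIdeal A) (C a * p)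
      = a • Ideal.Quotient.mk (bottIdeal A) p := by
  have h := map_smul (Ideal.Quotient.mkₐ (ZMod 2) (bottIdeal A)) a p
  rw [Ideal.Quotient.mkₐ_eq_mk] at h
  rw [← h, MvPolynomial.smul_eq_C_mul]

/-- The reduction identity in the quotient ring. -/
lemma mk_monomial_red (hA : IsUpperTri A) {m : Fin n →₀ ℕ} {j : Fin n} (hj : 2 ≤ m j) :
    Ideal.Quotient.mk (bottIdeal A) (monomial m 1)
      = ∑ i : Fin n, A i j • Ideal.Quotient.mk (bottIdeal A)
          (monomial (m - Finsupp.single j 1 + Finsupp.single i 1) 1) := by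
  have harg1 : m - Finsupp.single j 1 - Finsupp.single j 1 + Finsupp.single j 1
      + Finsupp.single j 1 = m := by
    ext a
    simp only [Finsupp.coe_add, Finsupp.coe_tsub, Pi.add_apply, Pi.sub_apply,
      Finsupp.single_apply]
    rcases eq_or_ne j a with rfl | h
    · simp only [eq_self_iff_true, if_true]; omega
    · simp only [if_neg h]; omega
  have harg2 : ∀ i : Fin n, m - Finsupp.single j 1 - Finsupp.single j 1 + Finsupp.single j 1
      + Finsupp.single i 1 = m - Finsupp.single j 1 + Finsupp.single i 1 := by
    intro i
    ext a
    simp only [Finsupp.coe_add, Finsupp.coe_tsub, Pi.add_apply, Pi.sub_apply,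
      Finsupp.single_apply]
    rcases eq_or_ne j a with rfl | h
    · simp only [eq_self_iff_true, if_true]; split_ifs <;> omega
    · simp only [if_neg h]; split_ifs <;> omega
  have hdiff : (monomial m 1 : MvPolynomial (Fin n) (ZMod 2))
      - ∑ i : Fin n, C (A i j) * monomial (m - Finsupp.single j 1 + Finsupp.single i 1) 1
      ∈ bottIdeal A := by
    have e : (monomial m 1 : MvPolynomial (Fin n) (ZMod 2))
        - ∑ i : Fin n, C (A i j) * monomial (m - Finsupp.single j 1 + Finsupp.single i 1) 1
        = monomial (m - Finsupp.single j 1 - Finsupp.single j 1) 1 *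
          (X j ^ 2 - X j * ∑ i : Fin n, C (A i j) * X i) := by
      rw [mul_rel_expand, harg1]
      congr 1
      refine Finset.sum_congr rfl fun i _ => ?_
      rw [harg2 i, C_mul_monomial, mul_one]
    rw [e]
    exact Ideal.mul_mem_left _ _ (Ideal.subset_span ⟨j, rfl⟩)
  have := Ideal.Quotient.eq.mpr
    (show (monomial m 1 : MvPolynomial (Fin n) (ZMod 2))
      - ∑ i : Fin n, C (A i j) * monomial (m - Finsupp.single j 1 + Finsupp.single i 1) 1
      ∈ bottIdeal A from hdiff)
  rw [this, map_sum]
  exact Finset.sum_congr rfl fun i _ => mk_smul _ _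

lemma dsum_eq_of_homogeneous {p : MvPolynomial (Fin n) (ZMod 2)} {q : ℕ}
    (hp : p.IsHomogeneous q) {m : Fin n →₀ ℕ} (hm : m ∈ p.support) : dsum m = q := by
  have h1 : Finsupp.degree m = q := by
    rw [Finsupp.degree_eq_weight_one]
    exact hp (MvPolynomial.mem_support_iff.mp hm)
  rw [← h1, Finsupp.degree_apply, dsum,
    ← Finset.sum_subset (Finset.subset_univ m.support)
      (fun x _ hx => Finsupp.notMem_support_iff.mp hx)]

end BottAux

open BottAux Finsupp in
/-- The square-free monomials `x_{i_1} ⋯ x_{i_q}` (indexed by `q`-element subsets of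
`{1,…,n}`) form a basis of the degree-`q` part `H^q` of the Bott ring of a strictly
upper triangular matrix `A`; in particular `dim H^q = C(n,q)`. -/
theorem stmt0 {n : ℕ} (A : Matrix (Fin n) (Fin n) (ZMod 2)) (hA : IsUpperTri A) (q : ℕ) :
    LinearIndependent (ZMod 2)
      (fun s : {s : Finset (Fin n) // s.card = q} => ∏ i ∈ s.1, bx A i) ∧
    Submodule.span (ZMod 2)
      (Set.range (fun s : {s : Finset (Fin n) // s.card = q} => ∏ i ∈ s.1, bx A i))
      = degq A q ∧
    Module.finrank (ZMod 2) (degq A q) = n.choose q := by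
  set v : {s : Finset (Fin n) // s.card = q} → BottRing A :=
    fun s => ∏ i ∈ s.1, bx A i with hv
  set mk := Ideal.Quotient.mk (bottIdeal A) with hmk
  have hv_mk : ∀ s : {s : Finset (Fin n) // s.card = q},
      v s = mk (monomial (indF s.1) 1) := by
    intro s
    rw [hv, monomial_indF, map_prod]
    rfl
  -- Linear independence
  have hindep : LinearIndependent (ZMod 2) v := by
    rw [Fintype.linearIndependent_iff]
    intro g hg s0
    set P : MvPolynomial (Fin n) (ZMod 2) :=
      ∑ s : {s : Finset (Fin n) // s.card = q}, g s • monomial (indF s.1) 1 with hP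
    have hmkP : mk P = 0 := by
      rw [hP, map_sum, ← hg]
      refine Finset.sum_congr rfl fun s _ => ?_
      rw [hv_mk s, ← mk_smul, MvPolynomial.smul_eq_C_mul]
    have hPmem : P ∈ bottIdeal A := (Ideal.Quotient.eq_zero_iff_mem).mp hmkP
    have hPhi : Phi A P = 0 := Phi_ideal hA hPmem
    rw [hP, map_sum] at hPhi
    have hPhi2 : ∑ s : {s : Finset (Fin n) // s.card = q}, g s • Finsupp.single s.1 (1 : ZMod 2)
        = 0 := by
      rw [← hPhi]
      refine Finset.sum_congr rfl fun s _ => ?_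
      rw [map_smul, Phi_monomial, one_smul, NFs_squarefree (indF_sf s.1), indF_support]
    have heval := DFunLike.congr_fun hPhi2 s0.1
    rw [Finsupp.finset_sum_apply] at heval
    simp only [Finsupp.smul_apply, Finsupp.single_apply] at heval
    rw [Finset.sum_eq_single s0 (fun b _ hb => by
        rw [if_neg (fun h => hb (Subtype.ext h)), smul_zero])
      (fun h => absurd (Finset.mem_univ s0) h)] at heval
    simpa using heval
  have hspan : Submodule.span (ZMod 2) (Set.range v) = degq A q := by
    have hle1 : Submodule.span (ZMod 2) (Set.range v) ≤ degq A q := by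
      rw [Submodule.span_le]
      rintro _ ⟨s, rfl⟩
      refine Submodule.subset_span ⟨∏ i ∈ s.1, X i, ?_, ?_⟩
      · have := MvPolynomial.IsHomogeneous.prod s.1
          (fun i => (X i : MvPolynomial (Fin n) (ZMod 2))) (fun _ => 1)
          (fun i _ => MvPolynomial.isHomogeneous_X _ _)
        simpa [s.2] using this
      · rw [hv_mk s, monomial_indF]
    have hle2 : degq A q ≤ Submodule.span (ZMod 2) (Set.range v) := by
      rw [degq, Submodule.span_le]
      rintro _ ⟨p, hp, rfl⟩
      -- reduce to monomials
      have key : ∀ k (m : Fin n →₀ ℕ), wt m ≤ k → dsum m = q →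
          mk (monomial m 1) ∈ Submodule.span (ZMod 2) (Set.range v) := by
        intro k
        induction k using Nat.strong_induction_on with
        | _ k IH =>
        intro m hk hdeg
        by_cases hsf : ∀ j, m j ≤ 1
        · have hcard : m.support.card = q := by
            rw [dsum_squarefree_card hsf, hdeg]
          refine Submodule.subset_span ⟨⟨m.support, hcard⟩, ?_⟩
          rw [hv_mk ⟨m.support, hcard⟩]
          exact congrArg mk (congrArg (fun u => monomial u (1 : ZMod 2))
            (monomial_squarefree hsf).symm)
        · push_neg at hsf
          obtain ⟨j, hj⟩ := hsf
          have hj2 : 2 ≤ m j := hj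
          rw [mk_monomial_red hA hj2]
          refine Submodule.sum_mem _ fun i _ => ?_
          by_cases hz : A i j = 0
          · rw [hz, zero_smul]; exact Submodule.zero_mem _
          · have hij := lt_of_A_ne hA hz
            have hwlt : wt (m - Finsupp.single j 1 + Finsupp.single i 1) < wt m :=
              wt_red hij (by omega)
            have hk2 : 1 ≤ k := le_trans (by omega) (le_trans (two_le_wt hj2) hk)
            exact Submodule.smul_mem _ _
              (IH (k-1) (by omega) _ (by omega) (by rw [dsum_red (by omega), hdeg]))
      have hps : mk p = ∑ m ∈ p.support, MvPolynomial.coeff m p • mk (monomial m 1) := by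
        conv_lhs => rw [p.as_sum]
        rw [map_sum]
        refine Finset.sum_congr rfl fun m _ => ?_
        rw [show (monomial m (MvPolynomial.coeff m p) : MvPolynomial (Fin n) (ZMod 2))
            = MvPolynomial.coeff m p • monomial m 1 by
            rw [MvPolynomial.smul_monomial, smul_eq_mul, mul_one],
          MvPolynomial.smul_eq_C_mul, mk_smul]
      rw [hps]
      exact Submodule.sum_mem _ fun m hm => Submodule.smul_mem _ _
        (key (wt m) m le_rfl (dsum_eq_of_homogeneous hp hm))
    exact le_antisymm hle1 hle2
  exact ⟨hindep, hspan, by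
    rw [← hspan, finrank_span_eq_card hindep, Fintype.card_finset_len, Fintype.card_fin]⟩
end

section
/- Let A ∈ 𝔅(n) and H = (Z/2)[x_1,...,x_n]/(x_j^2 = x_j α_j) where α_j = Σ_{i=1}^n A^i_j x_i. If α ∈ H^1 is an eigen-element of H (i.e., there exists x ∈ H^1 with x^2 = αx, x ≠ 0 and x ≠ α), then α = α_j for some j ∈ {1,...,n}. -/
open MvPolynomial

section Aux

variable {n : ℕ}

private lemma zmod2 : ∀ r : ZMod 2, r = 0 ∨ r = 1 := by decide

/-- linear form -/
noncomputable def lf (c : Fin n → ZMod 2) : MvPolynomial (Fin n) (ZMod 2) :=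
  ∑ t, C (c t) * X t

lemma pair_cond {i j t s : Fin n} (hij : i ≠ j) :
    (Finsupp.single t 1 + Finsupp.single s 1 = Finsupp.single i 1 + Finsupp.single j 1)
      ↔ (t = i ∧ s = j) ∨ (t = j ∧ s = i) := by
  rw [Finsupp.single_add_single_eq_single_add_single one_ne_zero one_ne_zero]
  simp [hij]

lemma pair_cond2 {j t s : Fin n} :
    (Finsupp.single t 1 + Finsupp.single s 1 = Finsupp.single j (2:ℕ)) ↔ (t = j ∧ s = j) := by
  have h2 : (Finsupp.single j (2:ℕ)) = Finsupp.single j 1 + Finsupp.single j 1 := by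
    rw [← Finsupp.single_add]
  rw [h2, Finsupp.single_add_single_eq_single_add_single one_ne_zero one_ne_zero]
  constructor
  · rintro ((⟨h1,h2⟩)|(⟨-,h1,h2⟩)|(⟨h,-⟩)) <;> first | exact ⟨h1,h2⟩ | omega
  · rintro ⟨h1,h2⟩; exact Or.inl ⟨h1,h2⟩

lemma coeff_lf_mul (c a : Fin n → ZMod 2) (m : Fin n →₀ ℕ) :
    coeff m (lf c * lf a) =
      ∑ t, ∑ s, c t * a s *
        (if Finsupp.single t 1 + Finsupp.single s 1 = m then 1 else 0) := by
  classical
  rw [lf, lf, Finset.sum_mul_sum, coeff_sum]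
  refine Finset.sum_congr rfl fun t _ => ?_
  rw [coeff_sum]
  refine Finset.sum_congr rfl fun s _ => ?_
  have hX : (X t : MvPolynomial (Fin n) (ZMod 2)) * X s
      = monomial (Finsupp.single t 1 + Finsupp.single s 1) 1 := by
    rw [X, X, monomial_mul, one_mul]
  calc coeff m (C (c t) * X t * (C (a s) * X s))
      = coeff m (C (c t) * (C (a s) * (X t * X s))) := by ring_nf
    _ = c t * (a s * coeff m (X t * X s)) := by rw [coeff_C_mul, coeff_C_mul]
    _ = _ := by rw [hX, coeff_monomial, mul_assoc]

lemma coeff_lf_mul_pair (c a : Fin n → ZMod 2) {i j : Fin n} (hij : i ≠ j) :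
    coeff (Finsupp.single i 1 + Finsupp.single j 1) (lf c * lf a)
      = c i * a j + c j * a i := by
  classical
  rw [coeff_lf_mul]
  have key : ∀ t s : Fin n, c t * a s *
      (if Finsupp.single t 1 + Finsupp.single s 1
          = Finsupp.single i 1 + Finsupp.single j 1 then (1:ZMod 2) else 0)
      = (if t = i ∧ s = j then c i * a j else 0)
        + (if t = j ∧ s = i then c j * a i else 0) := by
    intro t s
    by_cases h1 : t = i <;> by_cases h2 : s = j <;> by_cases h3 : t = j <;>
      by_cases h4 : s = i <;> simp_all [pair_cond hij]
  simp_rw [key, Finset.sum_add_distrib, ite_and]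
  simp [Finset.sum_ite_eq']

lemma coeff_lf_mul_sq (c a : Fin n → ZMod 2) (j : Fin n) :
    coeff (Finsupp.single j 2) (lf c * lf a) = c j * a j := by
  classical
  rw [coeff_lf_mul]
  have key : ∀ t s : Fin n, c t * a s *
      (if Finsupp.single t 1 + Finsupp.single s 1 = Finsupp.single j 2 then (1:ZMod 2) else 0)
      = (if t = j ∧ s = j then c j * a j else 0) := by
    intro t s
    by_cases h1 : t = j <;> by_cases h2 : s = j <;> simp_all [pair_cond2]
  simp_rw [key, ite_and]
  simp [Finset.sum_ite_eq']

end Aux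

section Aux2

variable {n : ℕ} (A : Matrix (Fin n) (Fin n) (ZMod 2))

/-- delta function -/
noncomputable def dl (k : Fin n) : Fin n → ZMod 2 := fun t => if t = k then 1 else 0

lemma lf_dl (k : Fin n) : lf (dl k) = X k := by
  classical
  rw [lf]
  have : ∀ t : Fin n, C (dl k t) * X t = if t = k then X k else 0 := by
    intro t
    by_cases h : t = k <;> simp [dl, h]
  simp_rw [this, Finset.sum_ite_eq' Finset.univ k]
  simp

lemma gen_eq (k : Fin n) :
    X k ^ 2 - X k * ∑ i : Fin n, C (A i k) * X i
      = lf (dl k) * lf (dl k) - lf (dl k) * lf (fun i => A i k) := by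
  rw [lf_dl, sq, lf]

lemma gen_hom (k : Fin n) :
    (X (R := ZMod 2) k ^ 2 - X k * ∑ i : Fin n, C (A i k) * X i).IsHomogeneous 2 := by
  apply (isHomogeneous_X_pow _ _).sub
  have : ((X k : MvPolynomial (Fin n) (ZMod 2)) *
      ∑ i : Fin n, C (A i k) * X i).IsHomogeneous (1+1) :=
    (isHomogeneous_X _ _).mul (IsHomogeneous.sum _ _ _ fun i _ => isHomogeneous_C_mul_X _ _)
  simpa using this

lemma degree_single (i : Fin n) (k : ℕ) (hk : k ≠ 0) :
    Finsupp.degree (Finsupp.single i k) = k := by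
  rw [Finsupp.degree_single]

lemma deg_add (u v : Fin n →₀ ℕ) :
    Finsupp.degree (u + v) = Finsupp.degree u + Finsupp.degree v := by
  simp [Finsupp.degree_eq_weight_one, map_add]

/-- coefficient of a degree-2 monomial in `r * g` for homogeneous `g` of degree 2 -/
lemma coeff_mul_hom (r g : MvPolynomial (Fin n) (ZMod 2)) (hg : g.IsHomogeneous 2)
    (m : Fin n →₀ ℕ) (hm : Finsupp.degree m = 2) :
    coeff m (r * g) = coeff 0 r * coeff m g := by
  classical
  rw [coeff_mul]
  refine Finset.sum_eq_single (0, m) ?_ ?_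
  · rintro ⟨u, v⟩ huv hne
    rw [Finset.HasAntidiagonal.mem_antidiagonal] at huv
    by_cases hv : coeff v g = 0
    · simp [hv]
    · exfalso
      have hdv : Finsupp.degree v = 2 := by
        by_contra hd
        exact hv (hg.coeff_eq_zero hd)
      have hdu : Finsupp.degree u = 0 := by
        have := deg_add u v
        rw [huv, hm, hdv] at this
        omega
      have hu0 : u = 0 := (Finsupp.degree_eq_zero_iff u).mp hdu
      apply hne
      rw [hu0] at huv ⊢
      rw [zero_add] at huv
      exact Prod.ext rfl huv
  · intro hmem
    exfalso
    apply hmem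
    rw [Finset.HasAntidiagonal.mem_antidiagonal, zero_add]

/-- the quadratic functional -/
noncomputable def Rc (i j : Fin n) (p : MvPolynomial (Fin n) (ZMod 2)) : ZMod 2 :=
  coeff (Finsupp.single i 1 + Finsupp.single j 1) p + A i j * coeff (Finsupp.single j 2) p

lemma Rc_gen (hA : IsUpperTri A) {i j : Fin n} (hij : i < j) (k : Fin n) :
    Rc A i j (X k ^ 2 - X k * ∑ i : Fin n, C (A i k) * X i) = 0 := by
  have hij' : i ≠ j := ne_of_lt hij
  rw [gen_eq, Rc, coeff_sub, coeff_sub, coeff_lf_mul_pair _ _ hij', coeff_lf_mul_pair _ _ hij',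
    coeff_lf_mul_sq, coeff_lf_mul_sq]
  by_cases hkj : k = j
  · subst hkj
    have hik : i ≠ k := hij'
    have hkk : A k k = 0 := hA k k le_rfl
    simp [dl, hik, hkk]; exact CharTwo.add_self_eq_zero _
  · by_cases hki : k = i
    · subst hki
      have hji : A j k = 0 := hA j k (le_of_lt hij)
      have hjk : ¬ (j = k) := fun h => hij' h.symm
      simp [dl, hjk, hji]
    · have h1 : ¬ (i = k) := fun h => hki h.symm
      have h2 : ¬ (j = k) := fun h => hkj h.symm
      simp [dl, h1, h2]

lemma Rc_add (i j : Fin n) (p q : MvPolynomial (Fin n) (ZMod 2)) :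
    Rc A i j (p + q) = Rc A i j p + Rc A i j q := by
  simp [Rc, coeff_add]; ring

lemma Rc_ideal (hA : IsUpperTri A) {i j : Fin n} (hij : i < j)
    {p : MvPolynomial (Fin n) (ZMod 2)} (hp : p ∈ bottIdeal A) : Rc A i j p = 0 := by
  have key : ∀ p ∈ bottIdeal A, ∀ r, Rc A i j (r * p) = 0 := by
    intro p hp
    refine Submodule.span_induction ?_ ?_ ?_ ?_ hp
    · rintro q ⟨k, rfl⟩ r
      have hdeg1 : Finsupp.degree (Finsupp.single i 1 + Finsupp.single j 1) = 2 := by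
        rw [deg_add, degree_single _ _ one_ne_zero, degree_single _ _ one_ne_zero]; norm_num
      have hdeg2 : Finsupp.degree (Finsupp.single j (2:ℕ)) = 2 :=
        degree_single _ _ two_ne_zero
      rw [Rc, coeff_mul_hom r _ (gen_hom A k) _ hdeg1, coeff_mul_hom r _ (gen_hom A k) _ hdeg2]
      have h0 := Rc_gen A hA hij k
      rw [Rc] at h0
      calc coeff 0 r * coeff _ _ + A i j * (coeff 0 r * coeff _ _)
          = coeff 0 r * (coeff (Finsupp.single i 1 + Finsupp.single j 1)
              (X k ^ 2 - X k * ∑ i : Fin n, C (A i k) * X i)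
            + A i j * coeff (Finsupp.single j 2)
              (X k ^ 2 - X k * ∑ i : Fin n, C (A i k) * X i)) := by ring
        _ = 0 := by rw [h0, mul_zero]
    · intro r; rw [mul_zero, Rc]; simp
    · intro q q' _ _ h1 h2 r
      rw [mul_add, Rc_add, h1, h2, add_zero]
    · intro s q _ h r
      rw [smul_eq_mul, ← mul_assoc]
      exact h (r * s)
  have := key p hp 1
  rwa [one_mul] at this

end Aux2

/-- If `α ∈ H^1` is an eigen-element of the Bott ring (there is `x ∈ H^1` with
`x² = αx`, `x ≠ 0`, `x ≠ α`), then `α = α_j` for some `j`. -/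
theorem stmt5 {n : ℕ} (A : Matrix (Fin n) (Fin n) (ZMod 2)) (hA : IsUpperTri A)
    (α : BottRing A) (hα : α ∈ deg1 A)
    (h : ∃ x ∈ deg1 A, x ^ 2 = α * x ∧ x ≠ 0 ∧ x ≠ α) :
    ∃ j : Fin n, α = alphaEl A j := by
  classical
  obtain ⟨x, hx, hxe, hx0, hxa⟩ := h
  rw [deg1] at hx hα
  obtain ⟨c, hc⟩ := (Submodule.mem_span_range_iff_exists_fun _).mp hx
  obtain ⟨a, ha⟩ := (Submodule.mem_span_range_iff_exists_fun _).mp hα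
  have mk_lf : ∀ b : Fin n → ZMod 2,
      Ideal.Quotient.mk (bottIdeal A) (lf b) = ∑ t, b t • bx A t := by
    intro b
    rw [lf, map_sum]
    refine Finset.sum_congr rfl fun t _ => ?_
    rcases zmod2 (b t) with h1 | h1 <;> simp [h1, bx]
  have hxc : Ideal.Quotient.mk (bottIdeal A) (lf c) = x := by rw [mk_lf, hc]
  have hac : Ideal.Quotient.mk (bottIdeal A) (lf a) = α := by rw [mk_lf, ha]
  have hmem : lf c * lf c - lf a * lf c ∈ bottIdeal A := by
    rw [← Ideal.Quotient.eq, map_mul, map_mul, hxc, hac, ← sq, hxe]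
  have star : ∀ i j : Fin n, i < j →
      c i * c j + c j * c i + A i j * (c j * c j)
        = a i * c j + a j * c i + A i j * (a j * c j) := by
    intro i j hij
    have h0 := Rc_ideal A hA hij hmem
    rw [Rc, coeff_sub, coeff_sub, coeff_lf_mul_pair _ _ (ne_of_lt hij),
      coeff_lf_mul_pair _ _ (ne_of_lt hij), coeff_lf_mul_sq, coeff_lf_mul_sq] at h0
    linear_combination h0
  have hcne : ∃ j, c j = 1 := by
    by_contra hno
    push_neg at hno
    have hz : ∀ j, c j = 0 := fun j => (zmod2 (c j)).resolve_right (hno j)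
    apply hx0
    rw [← hc]
    simp [hz]
  let S : Finset (Fin n) := Finset.univ.filter fun j => c j = 1
  have hSne : S.Nonempty := by
    obtain ⟨j, hj⟩ := hcne
    exact ⟨j, by simp [S, hj]⟩
  set j₀ := S.max' hSne with hj₀
  have hc0 : c j₀ = 1 := by
    have := S.max'_mem hSne
    simpa [S] using this
  have hmax : ∀ k, j₀ < k → c k = 0 := by
    intro k hk
    rcases zmod2 (c k) with h1 | h1
    · exact h1
    · exact absurd (S.le_max' k (by simp [S, h1])) (not_le.mpr hk)
  have ha_gt : ∀ k, j₀ < k → a k = 0 := by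
    intro k hk
    have h := star j₀ k hk
    rw [hc0, hmax k hk] at h
    revert h
    generalize A j₀ k = u; generalize a j₀ = v; generalize a k = w
    revert u v w; decide
  rcases zmod2 (a j₀) with haj | haj
  · refine ⟨j₀, ?_⟩
    have hval : ∀ t, a t = A t j₀ := by
      intro t
      rcases lt_trichotomy t j₀ with ht | ht | ht
      · have h := star t j₀ ht
        rw [hc0, haj] at h
        revert h
        generalize A t j₀ = u; generalize a t = v; generalize c t = w
        revert u v w; decide
      · rw [ht, haj, hA j₀ j₀ le_rfl]
      · rw [ha_gt t ht, hA t j₀ (le_of_lt ht)]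
    rw [← ha, alphaEl]
    exact Finset.sum_congr rfl fun t _ => by rw [hval t]
  · exfalso
    apply hxa
    have hval : ∀ t, a t = c t := by
      intro t
      rcases lt_trichotomy t j₀ with ht | ht | ht
      · have h := star t j₀ ht
        rw [hc0, haj] at h
        revert h
        generalize A t j₀ = u; generalize a t = v; generalize c t = w
        revert u v w; decide
      · rw [ht, haj, hc0]
      · rw [ha_gt t ht, hmax t ht]
    rw [← hc, ← ha]
    exact (Finset.sum_congr rfl fun t _ => by rw [hval t]).symm
end

section
/- Let A ∈ 𝔅(n), H = (Z/2)[x_1,...,x_n]/(x_j^2 = x_j α_j) with α_j = Σ_i A^i_j x_i, and let α ∈ H^1 be an eigen-element. Then the eigen-space E_A(α) = { x ∈ H^1 : x^2 = αx } is the Z/2-subspace of H^1 spanned by α together with the elements x_i for which α_i = α. -/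
open MvPolynomial

section Aux

variable {n : ℕ}

private lemma zc : ∀ z : ZMod 2, z = 0 ∨ z = 1 := by decide

private lemma nle {f g : Fin n →₀ ℕ} (x : Fin n) (h : g x < f x) : ¬ f ≤ g :=
  fun hle => absurd (Finsupp.le_def.mp hle x) (not_le.mpr h)

private lemma neq_of_point {f g : Fin n →₀ ℕ} (x : Fin n) (h : f x ≠ g x) : f ≠ g :=
  fun he => h (by rw [he])

private lemma cmm (q : MvPolynomial (Fin n) (ZMod 2)) (s m : Fin n →₀ ℕ) :
    coeff m (q * monomial s 1) = if s ≤ m then coeff (m - s) q else 0 := by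
  rw [coeff_mul_monomial']; split <;> simp

private lemma pair_apply (j t x : Fin n) :
    (Finsupp.single j 1 + Finsupp.single t 1 : Fin n →₀ ℕ) x
      = (if j = x then 1 else 0) + (if t = x then 1 else 0) := by
  simp [Finsupp.single_apply]

private lemma sq_apply (j x : Fin n) :
    (Finsupp.single j 2 : Fin n →₀ ℕ) x = if j = x then 2 else 0 := by
  simp [Finsupp.single_apply]

private lemma hXX (j t : Fin n) :
    (X j * X t : MvPolynomial (Fin n) (ZMod 2))
      = monomial (Finsupp.single j 1 + Finsupp.single t 1) 1 := by
  rw [X, X, monomial_mul, one_mul]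

/-- The key linear functional vanishing on the Bott ideal. -/
lemma key_coeff (A : Matrix (Fin n) (Fin n) (ZMod 2)) (hA : IsUpperTri A)
    {k i : Fin n} (hki : k < i) {p : MvPolynomial (Fin n) (ZMod 2)} (hp : p ∈ bottIdeal A) :
    coeff (Finsupp.single k 1 + Finsupp.single i 1) p
      + A k i * coeff (Finsupp.single i 2) p = 0 := by
  have hki' : k ≠ i := ne_of_lt hki
  obtain ⟨q, rfl⟩ := Ideal.mem_span_range_iff_exists_fun.mp hp
  rw [coeff_sum, coeff_sum, Finset.mul_sum, ← Finset.sum_add_distrib]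
  apply Finset.sum_eq_zero
  intro j _
  set μ : Fin n →₀ ℕ := Finsupp.single k 1 + Finsupp.single i 1 with hμ
  set ν : Fin n →₀ ℕ := Finsupp.single i 2 with hν
  have expand : q j * (X j ^ 2 - X j * ∑ t : Fin n, C (A t j) * X t)
      = q j * monomial (Finsupp.single j 2) 1
        - ∑ t : Fin n, C (A t j)
            * (q j * monomial (Finsupp.single j 1 + Finsupp.single t 1) 1) := by
    rw [X_pow_eq_monomial, mul_sub]
    congr 1
    rw [Finset.mul_sum, Finset.mul_sum]
    refine Finset.sum_congr rfl fun t _ => ?_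
    rw [← hXX]; ring
  rw [expand, coeff_sub, coeff_sub, coeff_sum, coeff_sum]
  simp only [coeff_C_mul]
  have h1 : coeff μ (q j * monomial (Finsupp.single j 2) 1) = 0 := by
    rw [cmm, if_neg]
    refine nle j ?_
    rw [hμ, pair_apply, sq_apply]
    split_ifs <;> omega
  have h2 : coeff ν (q j * monomial (Finsupp.single j 2) 1)
      = if j = i then coeff 0 (q j) else 0 := by
    rcases eq_or_ne j i with rfl | hj
    · rw [cmm, if_pos le_rfl, if_pos rfl]; simp [hν]
    · rw [cmm, if_neg, if_neg hj]
      refine nle j ?_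
      rw [hν, sq_apply, sq_apply]
      simp [Ne.symm hj, hj]
  have hsum1 : (∑ t : Fin n, A t j
        * coeff μ (q j * monomial (Finsupp.single j 1 + Finsupp.single t 1) 1))
      = if j = i then A k i * coeff 0 (q j) else 0 := by
    rcases eq_or_ne j i with rfl | hj
    · rw [if_pos rfl]
      rw [Finset.sum_eq_single k]
      · rw [cmm]
        rw [add_comm (Finsupp.single j 1)]
        rw [if_pos le_rfl]
        simp [hμ, add_comm]
      · intro t _ ht
        rw [cmm, if_neg, mul_zero]
        rcases eq_or_ne t j with rfl | ht2
        · refine nle t ?_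
          rw [hμ, pair_apply, pair_apply]
          simp [hki', Ne.symm hki']
        · refine nle t ?_
          rw [hμ, pair_apply, pair_apply]
          simp [Ne.symm ht, Ne.symm ht2, ht, ht2, hki']
      · intro h; exact absurd (Finset.mem_univ k) h
    · rw [if_neg hj]
      apply Finset.sum_eq_zero
      intro t _
      rcases eq_or_ne j k with rfl | hjk
      · rcases eq_or_ne t i with rfl | ht
        · rw [hA t j hki.le, zero_mul]
        · rcases eq_or_ne t j with rfl | ht2
          · rw [cmm, if_neg, mul_zero]
            refine nle t ?_
            rw [hμ, pair_apply, pair_apply]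
            simp [hki', Ne.symm hj]
          · rw [cmm, if_neg, mul_zero]
            refine nle t ?_
            rw [hμ, pair_apply, pair_apply]
            simp [Ne.symm ht2, Ne.symm ht, ht, ht2]
      · rw [cmm, if_neg, mul_zero]
        refine nle j ?_
        rw [hμ, pair_apply, pair_apply]
        simp [Ne.symm hjk, Ne.symm hj]
  have hsum2 : (∑ t : Fin n, A t j
        * coeff ν (q j * monomial (Finsupp.single j 1 + Finsupp.single t 1) 1)) = 0 := by
    apply Finset.sum_eq_zero
    intro t _
    rcases eq_or_ne j i with rfl | hj
    · rcases eq_or_ne t j with rfl | ht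
      · rw [hA t t le_rfl, zero_mul]
      · rw [cmm, if_neg, mul_zero]
        refine nle t ?_
        rw [hν, pair_apply, sq_apply]
        simp [Ne.symm ht, ht]
    · rw [cmm, if_neg, mul_zero]
      refine nle j ?_
      rw [hν, pair_apply, sq_apply]
      simp [Ne.symm hj]
  rw [h1, h2, hsum1, hsum2]
  rcases eq_or_ne j i with rfl | hj
  · simp only [if_true, eq_self_iff_true]; ring
  · simp [hj]

/-- The linear polynomial with coefficient vector `c`. -/
noncomputable def lin (c : Fin n → ZMod 2) : MvPolynomial (Fin n) (ZMod 2) :=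
  ∑ i : Fin n, C (c i) * X i

lemma lin_mul (b c : Fin n → ZMod 2) :
    lin b * lin c = ∑ p : Fin n, ∑ q : Fin n,
      monomial (Finsupp.single p 1 + Finsupp.single q 1) (b p * c q) := by
  rw [lin, lin, Finset.sum_mul_sum]
  refine Finset.sum_congr rfl fun p _ => Finset.sum_congr rfl fun q _ => ?_
  rw [C_mul_X_eq_monomial, C_mul_X_eq_monomial, monomial_mul]

lemma coeff_lin_pair (b c : Fin n → ZMod 2) {k i : Fin n} (hki : k ≠ i) :
    coeff (Finsupp.single k 1 + Finsupp.single i 1) (lin b * lin c)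
      = b k * c i + b i * c k := by
  rw [lin_mul, coeff_sum]
  have hinner : ∀ p : Fin n,
      coeff (Finsupp.single k 1 + Finsupp.single i 1)
        (∑ q : Fin n, monomial (Finsupp.single p 1 + Finsupp.single q 1) (b p * c q))
      = (if p = k then b k * c i else 0) + (if p = i then b i * c k else 0) := by
    intro p
    rw [coeff_sum]
    simp only [coeff_monomial]
    rcases eq_or_ne p k with rfl | hpk
    · rw [if_pos rfl, if_neg hki, add_zero]
      rw [Finset.sum_eq_single i]
      · rw [if_pos rfl]
      · intro q _ hq
        exact if_neg fun he =>
          hq (Finsupp.single_left_injective one_ne_zero (add_left_cancel he))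
      · intro h; exact absurd (Finset.mem_univ i) h
    · rcases eq_or_ne p i with rfl | hpi
      · rw [if_neg hpk, if_pos rfl, zero_add]
        rw [Finset.sum_eq_single k]
        · rw [if_pos (add_comm _ _)]
        · intro q _ hq
          exact if_neg fun he => hq (Finsupp.single_left_injective one_ne_zero
            (add_right_cancel ((add_comm (Finsupp.single p 1) (Finsupp.single q 1)).symm.trans he)))
        · intro h; exact absurd (Finset.mem_univ k) h
      · rw [if_neg hpk, if_neg hpi, add_zero]
        apply Finset.sum_eq_zero
        intro q _
        rw [if_neg]
        refine neq_of_point p ?_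
        rw [pair_apply, pair_apply]
        simp [Ne.symm hpk, Ne.symm hpi]
  rw [Finset.sum_congr rfl fun p _ => hinner p, Finset.sum_add_distrib,
    Finset.sum_ite_eq' Finset.univ k, Finset.sum_ite_eq' Finset.univ i]
  simp

lemma coeff_lin_sq (b c : Fin n → ZMod 2) (i : Fin n) :
    coeff (Finsupp.single i 2) (lin b * lin c) = b i * c i := by
  rw [lin_mul, coeff_sum]
  have hinner : ∀ p : Fin n,
      coeff (Finsupp.single i 2)
        (∑ q : Fin n, monomial (Finsupp.single p 1 + Finsupp.single q 1) (b p * c q))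
      = if p = i then b i * c i else 0 := by
    intro p
    rw [coeff_sum]
    simp only [coeff_monomial]
    rcases eq_or_ne p i with rfl | hpi
    · rw [if_pos rfl]
      rw [Finset.sum_eq_single p]
      · rw [if_pos (by rw [← Finsupp.single_add])]
      · intro q _ hq
        exact if_neg fun he => hq (Finsupp.single_left_injective one_ne_zero
          (add_left_cancel (he.trans (by rw [← Finsupp.single_add]; norm_num))))
      · intro h; exact absurd (Finset.mem_univ p) h
    · rw [if_neg hpi]
      apply Finset.sum_eq_zero
      intro q _
      rw [if_neg]
      refine neq_of_point p ?_
      rw [pair_apply, sq_apply]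
      simp [Ne.symm hpi]
  rw [Finset.sum_congr rfl fun p _ => hinner p, Finset.sum_ite_eq' Finset.univ i]
  simp

/-- The combinatorial core: solutions of the eigen-equations. -/
lemma core (A : Matrix (Fin n) (Fin n) (ZMod 2)) (hA : IsUpperTri A)
    (a c : Fin n → ZMod 2)
    (hrel : ∀ k i : Fin n, k < i →
      c k * c i + c i * c k - (a k * c i + a i * c k) + A k i * (c i * c i - a i * c i) = 0) :
    ∃ ε : ZMod 2, ∀ i, c i ≠ ε * a i → ∀ k, A k i = a k := by
  have keyT : ∀ i, c i = 1 → a i = 0 → ∀ k, A k i = a k := by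
    intro i hci hai k
    rcases lt_trichotomy k i with hk | rfl | hk
    · have h := hrel k i hk
      rw [hci, hai] at h
      rcases zc (c k) with h1 | h1 <;> rcases zc (a k) with h2 | h2 <;>
        rcases zc (A k i) with h3 | h3 <;> rw [h1, h2, h3] at h <;> rw [h3, h2] <;>
          first | rfl | exact absurd h (by decide)
    · rw [hA k k le_rfl, hai]
    · rw [hA k i hk.le]
      rcases zc (a k) with h2 | h2
      · rw [h2]
      · exfalso
        have h := hrel i k hk
        rw [hci, hai, h2] at h
        rcases zc (c k) with h1 | h1 <;> rcases zc (A i k) with h3 | h3 <;>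
          rw [h1, h3] at h <;> exact absurd h (by decide)
  by_cases hd : ∀ i, c i = 1 → a i = 0
  · refine ⟨0, fun i hi k => ?_⟩
    rw [zero_mul] at hi
    have hci : c i = 1 := (zc (c i)).resolve_left hi
    exact keyT i hci (hd i hci) k
  · push_neg at hd
    obtain ⟨i0, hci0, hai0⟩ := hd
    have hai0' : a i0 = 1 := (zc (a i0)).resolve_left hai0
    refine ⟨1, fun i hi k => ?_⟩
    rw [one_mul] at hi
    rcases zc (a i) with ha | ha
    · have hci : c i = 1 := (zc (c i)).resolve_left (by rw [ha] at hi; exact hi)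
      exact keyT i hci ha k
    · exfalso
      have hci : c i = 0 := by
        rcases zc (c i) with h | h
        · exact h
        · exact absurd (h.trans ha.symm) hi
      have hne : i ≠ i0 := fun he => by
        rw [he, hci0] at hci; exact absurd hci (by decide)
      rcases hne.lt_or_gt with hlt | hlt
      · have h := hrel i i0 hlt
        rw [hci, hci0, ha, hai0'] at h
        rcases zc (A i i0) with h3 | h3 <;> rw [h3] at h <;> exact absurd h (by decide)
      · have h := hrel i0 i hlt
        rw [hci, hci0, ha, hai0'] at h
        rcases zc (A i0 i) with h3 | h3 <;> rw [h3] at h <;> exact absurd h (by decide)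

private lemma mk_lin (A : Matrix (Fin n) (Fin n) (ZMod 2)) (c : Fin n → ZMod 2) :
    Ideal.Quotient.mk (bottIdeal A) (lin c) = ∑ i : Fin n, c i • bx A i := by
  rw [lin, map_sum]
  refine Finset.sum_congr rfl fun i _ => ?_
  rw [map_mul, ← MvPolynomial.algebraMap_eq, Ideal.Quotient.mk_algebraMap, ← Algebra.smul_def]
  rfl

private lemma bx_sq (A : Matrix (Fin n) (Fin n) (ZMod 2)) (j : Fin n) :
    bx A j ^ 2 = alphaEl A j * bx A j := by
  have hg : (X j ^ 2 - X j * ∑ t : Fin n, C (A t j) * X t) ∈ bottIdeal A :=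
    Ideal.subset_span ⟨j, rfl⟩
  have h2 : Ideal.Quotient.mk (bottIdeal A) (X j ^ 2)
      = Ideal.Quotient.mk (bottIdeal A) (X j * ∑ t : Fin n, C (A t j) * X t) :=
    Ideal.Quotient.eq.mpr hg
  have h3 : (X j * ∑ t : Fin n, C (A t j) * X t)
      = lin (fun t => A t j) * X j := by
    rw [lin]; ring
  rw [bx, ← map_pow, h2, h3, map_mul, mk_lin]
  rfl

end Aux

/-- The eigen-space `E_A(α) = {x ∈ H^1 : x² = αx}` of an eigen-element `α` is the
`Z/2`-subspace of `H^1` spanned by `α` together with the `x_i` with `α_i = α`. -/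
theorem stmt6 {n : ℕ} (A : Matrix (Fin n) (Fin n) (ZMod 2)) (hA : IsUpperTri A)
    (α : BottRing A) (hα : α ∈ deg1 A)
    (h : ∃ x ∈ deg1 A, x ^ 2 = α * x ∧ x ≠ 0 ∧ x ≠ α) :
    {x : BottRing A | x ∈ deg1 A ∧ x ^ 2 = α * x} =
      (Submodule.span (ZMod 2)
        ({α} ∪ {y : BottRing A | ∃ i : Fin n, alphaEl A i = α ∧ y = bx A i}) :
        Submodule (ZMod 2) (BottRing A)) := by
  clear h
  have hα' := hα
  rw [deg1] at hα'
  obtain ⟨a, ha⟩ := (Submodule.mem_span_range_iff_exists_fun (ZMod 2)).mp hα'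
  ext x
  simp only [Set.mem_setOf_eq, SetLike.mem_coe]
  constructor
  · rintro ⟨hx1, hx2⟩
    rw [deg1] at hx1
    obtain ⟨c, hc⟩ := (Submodule.mem_span_range_iff_exists_fun (ZMod 2)).mp hx1
    have hxm : x = Ideal.Quotient.mk (bottIdeal A) (lin c) := by rw [mk_lin, hc]
    have ham : α = Ideal.Quotient.mk (bottIdeal A) (lin a) := by rw [mk_lin, ha]
    have hmem : lin c * lin c - lin a * lin c ∈ bottIdeal A := by
      rw [← Ideal.Quotient.eq_zero_iff_mem, map_sub, map_mul, map_mul, ← hxm, ← ham,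
        ← sq, hx2, sub_self]
    have hrel : ∀ k i : Fin n, k < i →
        c k * c i + c i * c k - (a k * c i + a i * c k)
          + A k i * (c i * c i - a i * c i) = 0 := by
      intro k i hki
      have hk := key_coeff A hA hki hmem
      rw [coeff_sub, coeff_sub, coeff_lin_pair c c hki.ne, coeff_lin_pair a c hki.ne,
        coeff_lin_sq, coeff_lin_sq] at hk
      exact hk
    obtain ⟨ε, hε⟩ := core A hA a c hrel
    have hx' : x = ε • α + ∑ i : Fin n, (c i - ε * a i) • bx A i := by
      rw [← hc, ← ha, Finset.smul_sum, ← Finset.sum_add_distrib]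
      refine Finset.sum_congr rfl fun i _ => ?_
      rw [smul_smul, ← add_smul]
      congr 1
      ring
    rw [hx']
    refine add_mem (Submodule.smul_mem _ _ (Submodule.subset_span (Or.inl rfl))) ?_
    refine Submodule.sum_mem _ fun i _ => ?_
    rcases zc (c i - ε * a i) with h0 | h0
    · rw [h0, zero_smul]; exact zero_mem _
    · rw [h0, one_smul]
      refine Submodule.subset_span (Or.inr ⟨i, ?_, rfl⟩)
      have hAi := hε i (sub_ne_zero.mp (by rw [h0]; exact one_ne_zero))
      rw [alphaEl, ← ha]
      exact Finset.sum_congr rfl fun k _ => by rw [hAi k]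
  · intro hx
    have h2 : (2 : BottRing A) = 0 := by
      have h20 : ((2 : ZMod 2) = 0) := rfl
      calc (2 : BottRing A) = algebraMap (ZMod 2) (BottRing A) 2 := (map_ofNat _ 2).symm
        _ = algebraMap (ZMod 2) (BottRing A) 0 := by rw [h20]
        _ = 0 := map_zero _
    induction hx using Submodule.span_induction with
    | mem y hy =>
      rcases hy with hy | ⟨i, hi, rfl⟩
      · rw [Set.mem_singleton_iff] at hy
        subst hy
        exact ⟨hα, sq _⟩
      · refine ⟨?_, by rw [bx_sq, hi]⟩
        rw [deg1]
        exact Submodule.subset_span ⟨i, rfl⟩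
    | zero => exact ⟨zero_mem _, by ring⟩
    | add u v hu hv ihu ihv =>
      exact ⟨add_mem ihu.1 ihv.1, by rw [add_sq, ihu.2, ihv.2, h2]; ring⟩
    | smul r u hu ihu =>
      rcases zc r with h0 | h0
      · rw [h0, zero_smul]; exact ⟨zero_mem _, by ring⟩
      · rw [h0, one_smul]; exact ihu
end

section
/- For A ∈ 𝔅(n), define involutions a_1,...,a_n of the torus T^n = (S^1)^n by a_i(z_1,...,z_n) = (z_1,...,z_{i-1}, −z_i, z_{i+1}(A^i_{i+1}), ..., z_n(A^i_n)), where z(0) = z and z(1) = z̄ (complex conjugate). Then the a_i pairwise commute, each a_i has order 2, and the group G(A) they generate is an elementary abelian 2-group of rank n acting freely on T^n. -/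
/-- The torus `T^n = (S^1)^n`, modelled additively as `(ℝ/ℤ)^n`; under the
exponential map `u ↦ exp(2π√-1 u)`, the map `z ↦ -z` corresponds to
`u ↦ u + 1/2` and complex conjugation `z ↦ z̄` corresponds to `u ↦ -u`. -/
abbrev Torus (n : ℕ) : Type := Fin n → AddCircle (1 : ℝ)

/-- The involution `a_i(z₁,…,zₙ) = (z₁,…,z_{i-1}, -z_i, z_{i+1}(A^i_{i+1}),…,z_n(A^i_n))`,
where `z(0) = z` and `z(1) = z̄`. -/
noncomputable def bottInv {n : ℕ} (A : Matrix (Fin n) (Fin n) (ZMod 2)) (i : Fin n) :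
    Function.End (Torus n) :=
  fun u j => if j = i then u i + ((1 / 2 : ℝ) : AddCircle (1 : ℝ))
    else if A i j = 1 then -u j else u j

namespace BottAux

noncomputable def half : AddCircle (1 : ℝ) := ((1 / 2 : ℝ) : AddCircle (1 : ℝ))

lemma half_add_half : half + half = 0 := by
  have h : half + half = (((1/2 + 1/2 : ℝ)) : AddCircle (1:ℝ)) := rfl
  rw [h]
  norm_num

lemma neg_half : -half = half := neg_eq_of_add_eq_zero_left half_add_half

lemma half_ne_zero : half ≠ 0 := by
  intro h
  rw [show half = ((1/2 : ℝ) : AddCircle (1:ℝ)) from rfl,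
    AddCircle.coe_eq_zero_iff] at h
  obtain ⟨m, hm⟩ := h
  have h1 : (m : ℝ) = 1/2 := by simpa using hm
  have h2 : ((2 * m : ℤ) : ℝ) = 1 := by push_cast; linarith
  have h3 : (2 * m : ℤ) = 1 := by exact_mod_cast h2
  omega

lemma two_cases (a : ZMod 2) : a = 0 ∨ a = 1 := by
  fin_cases a
  · exact Or.inl rfl
  · exact Or.inr rfl

lemma single {n : ℕ} {A : Matrix (Fin n) (Fin n) (ZMod 2)} (hA : IsUpperTri A)
    (i : Fin n) (u : Torus n) (k : Fin n) :
    bottInv A i u k = (if A i k = 1 then -(u k) else u k) + (if k = i then half else 0) := by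
  unfold bottInv
  by_cases h : k = i
  · subst h
    have h0 : A k k = 0 := hA k k le_rfl
    simp [h0, half]
  · simp only [if_neg h, add_zero]

lemma key {n : ℕ} {A : Matrix (Fin n) (Fin n) (ZMod 2)} (hA : IsUpperTri A)
    (c : Fin n → ZMod 2) (l : List (Fin n)) (u : Torus n) (k : Fin n) :
    ((l.map fun i => bottInv A i ^ (c i).val).prod) u k =
      (-1 : ℤ) ^ ((l.map fun i => c i * A i k).sum).val • u k
        + ((l.map fun i => c i * (if k = i then 1 else 0)).sum).val • half := by
  induction l with
  | nil =>
    show u k = _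
    simp
  | cons i l ih =>
    simp only [List.map_cons, List.prod_cons, List.sum_cons]
    have happ : ∀ f g : Function.End (Torus n), (f * g) u = f (g u) := fun _ _ => rfl
    rw [happ]
    rcases two_cases (c i) with h0 | h1
    · simp only [h0, ZMod.val_zero, pow_zero, zero_mul, zero_add]
      exact ih
    · simp only [h1, ZMod.val_one, pow_one, one_mul]
      rw [single hA, ih]
      by_cases hk : k = i
      · subst hk
        have hAkk : A k k = 0 := hA k k le_rfl
        rw [if_pos rfl, if_pos rfl, hAkk, zero_add]
        rcases two_cases ((l.map fun i => c i * (if k = i then 1 else 0)).sum) with ht | ht <;>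
          rw [ht] <;>
          simp [add_assoc, half_add_half, (by decide : ((1:ZMod 2) + 0).val = 1),
            (by decide : ((1:ZMod 2) + 1).val = 0), (by decide : ZMod.val (1:ZMod 2) = 1)]
      · rw [if_neg hk, if_neg hk, add_zero, zero_add]
        by_cases hAik : A i k = 1
        · rw [if_pos hAik, hAik]
          rcases two_cases ((l.map fun i => c i * A i k).sum) with hs | hs <;>
            rcases two_cases ((l.map fun i => c i * (if k = i then 1 else 0)).sum)
              with ht | ht <;>
            rw [hs, ht] <;>
            simp [neg_add, neg_half, add_comm, (by decide : ((1:ZMod 2) + 0).val = 1),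
              (by decide : ((1:ZMod 2) + 1).val = 0), (by decide : ZMod.val (1:ZMod 2) = 1)]
        · have hAik0 : A i k = 0 := (two_cases (A i k)).resolve_right hAik
          rw [if_neg hAik, hAik0, zero_add]

end BottAux

open BottAux in
/-- The `a_i` pairwise commute, each `a_i` has order 2, and the group `G(A)` they
generate is elementary abelian of rank `n` (the map `(Z/2)^n → End(T^n)`,
`c ↦ ∏ a_i^{c_i}`, is injective) and acts freely on `T^n`. -/
theorem stmt15 {n : ℕ} (A : Matrix (Fin n) (Fin n) (ZMod 2)) (hA : IsUpperTri A) :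
    (∀ i j : Fin n, bottInv A i * bottInv A j = bottInv A j * bottInv A i) ∧
    (∀ i : Fin n, bottInv A i * bottInv A i = 1) ∧
    (∀ i : Fin n, bottInv A i ≠ 1) ∧
    Function.Injective
      (fun c : Fin n → ZMod 2 => (List.ofFn fun i : Fin n => bottInv A i ^ (c i).val).prod) ∧
    (∀ c : Fin n → ZMod 2, c ≠ 0 →
      ∀ u : Torus n, ((List.ofFn fun i : Fin n => bottInv A i ^ (c i).val).prod) u ≠ u) := by
  have happ : ∀ f g : Function.End (Torus n), ∀ u, (f * g) u = f (g u) := fun _ _ _ => rfl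
  have master : ∀ (c : Fin n → ZMod 2) (u : Torus n) (k : Fin n),
      ((List.ofFn fun i : Fin n => bottInv A i ^ (c i).val).prod) u k =
        (-1 : ℤ) ^ ((∑ i, c i * A i k)).val • u k + (c k).val • half := by
    intro c u k
    have hsum : (∑ i, c i * (if k = i then 1 else 0)) = c k := by
      simp [mul_ite]
    rw [List.ofFn_eq_map, key hA c (List.finRange n) u k]
    rw [show (List.map (fun i => c i * A i k) (List.finRange n)).sum = ∑ i, c i * A i k by
      rw [← List.ofFn_eq_map, List.sum_ofFn]]
    rw [show (List.map (fun i => c i * (if k = i then 1 else 0)) (List.finRange n)).sum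
        = c k by rw [← List.ofFn_eq_map, List.sum_ofFn, hsum]]
  refine ⟨?_, ?_, ?_, ?_, ?_⟩
  · -- commutativity
    intro i j
    funext u k
    rw [happ, happ, single hA i (bottInv A j u) k, single hA j u k,
      single hA j (bottInv A i u) k, single hA i u k]
    by_cases hki : k = i
    · subst hki
      by_cases hkj : k = j
      · subst hkj; rfl
      · have hAkk : A k k = 0 := hA k k le_rfl
        rcases two_cases (A j k) with hj | hj <;>
          simp [hj, hkj, hAkk, neg_add, neg_half, add_comm]
    · by_cases hkj : k = j
      · subst hkj
        have hAkk : A k k = 0 := hA k k le_rfl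
        rcases two_cases (A i k) with hi | hi <;>
          simp [hi, hki, hAkk, neg_add, neg_half, add_comm]
      · rcases two_cases (A i k) with hi | hi <;> rcases two_cases (A j k) with hj | hj <;>
          simp [hi, hj, hki, hkj, neg_add, neg_half]
  · -- order two
    intro i
    funext u k
    rw [happ, single hA i (bottInv A i u) k, single hA i u k]
    show _ = u k
    by_cases hki : k = i
    · subst hki
      have hAkk : A k k = 0 := hA k k le_rfl
      simp [hAkk, add_assoc, half_add_half]
    · rcases two_cases (A i k) with hi | hi <;> simp [hi, hki]
  · -- nontrivial
    intro i h
    apply half_ne_zero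
    have h2 := congrFun (congrFun h (fun _ => 0)) i
    rw [single hA] at h2
    exact (by simpa using h2 : half = (1 : Function.End (Torus n)) (fun _ => 0) i)
  · -- injectivity
    intro c c' h
    funext k
    have h0 := congrFun (congrFun h (fun _ => (0 : AddCircle (1:ℝ)))) k
    have hc := master c (fun _ => 0) k
    have hc' := master c' (fun _ => 0) k
    simp only at h0
    rw [hc, hc'] at h0
    simp only [smul_zero, zero_add] at h0
    rcases two_cases (c k) with h1 | h1 <;> rcases two_cases (c' k) with h2 | h2 <;>
      rw [h1, h2] at h0 ⊢ <;>
      simp [(by decide : ZMod.val (1:ZMod 2) = 1), (by decide : ZMod.val (0:ZMod 2) = 0)]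
        at h0 ⊢ <;>
      first
        | exact absurd h0 half_ne_zero
        | exact absurd h0.symm half_ne_zero
  · -- free action
    intro c hc u hfix
    have hne : (Finset.univ.filter fun i => c i = 1).Nonempty := by
      rcases Function.ne_iff.mp hc with ⟨i, hi⟩
      exact ⟨i, by simp [(two_cases (c i)).resolve_left hi]⟩
    set k := (Finset.univ.filter fun i => c i = 1).min' hne with hk
    have hck : c k = 1 := by
      have hm := (Finset.univ.filter fun i => c i = 1).min'_mem hne
      simpa using hm
    have hs : (∑ i, c i * A i k) = 0 := by
      apply Finset.sum_eq_zero
      intro i _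
      rcases two_cases (c i) with h0 | h1
      · simp [h0]
      · have hki : k ≤ i := Finset.min'_le _ i (by simp [h1])
        simp [h1, hA i k hki]
    have hfx := congrFun hfix k
    rw [master c u k, hs, hck] at hfx
    simp only [ZMod.val_zero, pow_zero, one_smul, ZMod.val_one, one_nsmul] at hfx
    exact half_ne_zero (add_eq_left.mp hfx)
end

section
/- Let A ∈ 𝔅(n) with A^i_{i+1} = 1 for all i = 1,...,n−1 (i.e., A ∈ Δ(n)). Then A is Bott equivalent, using only operations of type Φ^k, to a unique matrix Ā ∈ Δ(n) with Ā^i_{i+2} = 0 for all i = 1,...,n−2. Consequently there are exactly 2^{(n−2)(n−3)/2} Bott equivalence classes in Δ(n) for n ≥ 2. -/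
/-- The second operation (Op2): the `j`-th column of `Φ^k(A)` is `A_j + A^k_j A_k`. -/
def Phi2 {n : ℕ} (A : Matrix (Fin n) (Fin n) (ZMod 2)) (k : Fin n) :
    Matrix (Fin n) (Fin n) (ZMod 2) :=
  fun i j => A i j + A k j * A i k

/-- Membership in `Δ(n) ⊆ 𝔅(n)`: strictly upper triangular with
`A^i_{i+1} = 1` for all `i`. -/
def InDelta {n : ℕ} (A : Matrix (Fin n) (Fin n) (ZMod 2)) : Prop :=
  IsUpperTri A ∧ ∀ i j : Fin n, (j : ℕ) = (i : ℕ) + 1 → A i j = 1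

/-- The equivalence relation on matrices generated by the operations `Φ^k`. -/
def Phi2Equiv {n : ℕ} : Matrix (Fin n) (Fin n) (ZMod 2) →
    Matrix (Fin n) (Fin n) (ZMod 2) → Prop :=
  Relation.EqvGen (fun A B => ∃ k : Fin n, B = Phi2 A k)

namespace BottAux

abbrev Mx (n : ℕ) := Matrix (Fin n) (Fin n) (ZMod 2)

instance {n : ℕ} (A : Mx n) : Decidable (IsUpperTri A) := by
  unfold IsUpperTri; exact @Fintype.decidableForallFintype _ _ (fun i => Fintype.decidableForallFintype) _

variable {n : ℕ}

lemma upper_mul_zero {A : Mx n} (h : IsUpperTri A) (j k : Fin n) :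
    A j k * A k j = 0 := by
  rcases le_total j k with hle | hle
  · rw [h k j hle, mul_zero]
  · rw [h j k hle, zero_mul]

lemma upper_phi2 {A : Mx n} (h : IsUpperTri A) (k : Fin n) :
    IsUpperTri (Phi2 A k) := by
  intro i j hji
  show A i j + A k j * A i k = 0
  rw [h i j hji]
  rcases le_total k i with hk | hk
  · rw [h i k hk, mul_zero, add_zero]
  · have : j ≤ k := le_trans hji hk
    rw [h k j this, zero_mul, add_zero]

lemma delta_phi2 {A : Mx n} (h : InDelta A) (k : Fin n) :
    InDelta (Phi2 A k) := by
  refine ⟨upper_phi2 h.1 k, ?_⟩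
  intro i j hij
  show A i j + A k j * A i k = 1
  rw [h.2 i j hij]
  rcases le_or_gt k i with hk | hk
  · rw [h.1 i k hk, mul_zero, add_zero]
  · have : j ≤ k := by
      rw [Fin.lt_def] at hk; rw [Fin.le_def]; omega
    rw [h.1 k j this, zero_mul, add_zero]

lemma invol {A : Mx n} {k : Fin n} (h : A k k = 0) :
    Phi2 (Phi2 A k) k = A := by
  have aux : ∀ a b c z : ZMod 2, z = 0 → (a + b*c) + (b + b*z)*(c + z*c) = a := by decide
  funext i j
  show (A i j + A k j * A i k) + (A k j + A k j * A k k) * (A i k + A k k * A i k) = A i j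
  exact aux _ _ _ _ h

lemma phi2_comm {A : Mx n} (hA : IsUpperTri A) (j k : Fin n) :
    Phi2 (Phi2 A j) k = Phi2 (Phi2 A k) j := by
  have aux : ∀ a b c d e f p : ZMod 2, p*e = 0 →
      (a + b*c) + (d + b*e)*(f + p*c) = (a + d*f) + (b + d*p)*(c + e*f) := by decide
  funext i l
  show (A i l + A j l * A i j) + ((A k l + A j l * A k j)) * ((A i k + A j k * A i j))
      = (A i l + A k l * A i k) + ((A j l + A k l * A j k)) * ((A i j + A k j * A i k))
  exact aux _ _ _ _ _ _ _ (upper_mul_zero hA j k)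

/-- Globally right-commutative version of `Phi2`. -/
def g (A : Mx n) (k : Fin n) : Mx n := if IsUpperTri A then Phi2 A k else A

lemma g_of_upper {A : Mx n} (h : IsUpperTri A) (k : Fin n) : g A k = Phi2 A k :=
  if_pos h

instance : RightCommutative (g (n := n)) := by
  constructor
  intro A j k
  by_cases h : IsUpperTri A
  · rw [g_of_upper h, g_of_upper h, g_of_upper (upper_phi2 h j),
      g_of_upper (upper_phi2 h k)]
    exact phi2_comm h j k
  · simp only [g, if_neg h]

lemma phi2_boundary {A : Mx n} (hA : IsUpperTri A) {k : Fin n}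
    (hk : (k : ℕ) = 0 ∨ (k : ℕ) + 1 = n) : Phi2 A k = A := by
  funext i j
  show A i j + A k j * A i k = A i j
  rcases hk with hk | hk
  · have : k ≤ i := by rw [Fin.le_def]; omega
    rw [hA i k this, mul_zero, add_zero]
  · have : j ≤ k := by rw [Fin.le_def]; have := j.isLt; omega
    rw [hA k j this, zero_mul, add_zero]

lemma secdiag_phi2 {A : Mx n} (hA : InDelta A) {i j : Fin n}
    (hij : (j : ℕ) = (i : ℕ) + 2) (k : Fin n) :
    Phi2 A k i j = A i j + (if (k : ℕ) = (i : ℕ) + 1 then 1 else 0) := by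
  show A i j + A k j * A i k = _
  by_cases hk : (k : ℕ) = (i : ℕ) + 1
  · rw [if_pos hk, hA.2 k j (by omega), hA.2 i k hk, one_mul]
  · rw [if_neg hk]
    rcases le_or_gt (k : ℕ) (i : ℕ) with h | h
    · rw [hA.1 i k (by rw [Fin.le_def]; omega), mul_zero]
    · rw [hA.1 k j (by rw [Fin.le_def]; omega), zero_mul]

lemma upper_foldl : ∀ (l : List (Fin n)) (A : Mx n), IsUpperTri A →
    IsUpperTri (l.foldl g A) := by
  intro l
  induction l with
  | nil => intro A hA; exact hA
  | cons k l ih =>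
    intro A hA
    have : IsUpperTri (g A k) := by rw [g_of_upper hA]; exact upper_phi2 hA k
    exact ih _ this

lemma delta_foldl : ∀ (l : List (Fin n)) (A : Mx n), InDelta A →
    InDelta (l.foldl g A) := by
  intro l
  induction l with
  | nil => intro A hA; exact hA
  | cons k l ih =>
    intro A hA
    have : InDelta (g A k) := by rw [g_of_upper hA.1]; exact delta_phi2 hA k
    exact ih _ this

lemma equiv_foldl : ∀ (l : List (Fin n)) (A : Mx n), IsUpperTri A →
    Phi2Equiv A (l.foldl g A) := by
  intro l
  induction l with
  | nil => intro A _; exact Relation.EqvGen.refl A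
  | cons k l ih =>
    intro A hA
    have h1 : Phi2Equiv A (g A k) := by
      rw [g_of_upper hA]
      exact Relation.EqvGen.rel _ _ ⟨k, rfl⟩
    have h2 : IsUpperTri (g A k) := by rw [g_of_upper hA]; exact upper_phi2 hA k
    exact Relation.EqvGen.trans _ _ _ h1 (ih _ h2)

/-- Folding `g` over a finite set of indices. -/
noncomputable def foldS (S : Finset (Fin n)) (A : Mx n) : Mx n := S.toList.foldl g A

lemma foldS_empty (A : Mx n) : foldS ∅ A = A := by
  simp [foldS]

lemma foldS_insert {S : Finset (Fin n)} {k : Fin n} (hk : k ∉ S) (A : Mx n) :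
    foldS (insert k S) A = foldS S (g A k) :=
  (Finset.toList_insert hk).foldl_eq A

lemma word_to_set : ∀ (l : List (Fin n)) (A : Mx n), InDelta A →
    ∃ S : Finset (Fin n), (∀ k ∈ S, 0 < (k : ℕ) ∧ (k : ℕ) + 1 < n) ∧
      l.foldl g A = foldS S A := by
  intro l
  induction l with
  | nil =>
    intro A _
    exact ⟨∅, by simp, (foldS_empty A).symm⟩
  | cons k l ih =>
    intro A hA
    have hgk : g A k = Phi2 A k := g_of_upper hA.1 k
    have hA' : InDelta (g A k) := by rw [hgk]; exact delta_phi2 hA k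
    obtain ⟨S, hS, hfold⟩ := ih (g A k) hA'
    have hstep : (k :: l).foldl g A = foldS S (g A k) := hfold
    by_cases hkS : k ∈ S
    · refine ⟨S.erase k, fun k' hk' => hS k' (Finset.mem_of_mem_erase hk'), ?_⟩
      rw [hstep]
      have h1 : S = insert k (S.erase k) := (Finset.insert_erase hkS).symm
      nth_rewrite 1 [h1]
      rw [foldS_insert (Finset.notMem_erase k S)]
      rw [hgk, g_of_upper (upper_phi2 hA.1 k), invol (hA.1 k k le_rfl)]
    · by_cases hmid : 0 < (k : ℕ) ∧ (k : ℕ) + 1 < n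
      · refine ⟨insert k S, ?_, ?_⟩
        · intro k' hk'
          rcases Finset.mem_insert.1 hk' with rfl | hk'
          · exact hmid
          · exact hS k' hk'
        · rw [hstep, foldS_insert hkS]
      · have hb : (k : ℕ) = 0 ∨ (k : ℕ) + 1 = n := by
          have := k.isLt; omega
        have : g A k = A := by rw [hgk]; exact phi2_boundary hA.1 hb
        rw [hstep, this]
        exact ⟨S, hS, rfl⟩

lemma foldS_secdiag : ∀ (S : Finset (Fin n)) (A : Mx n), InDelta A →
    ∀ (i j : Fin n), (j : ℕ) = (i : ℕ) + 2 →
    foldS S A i j = A i j + (if ∃ k ∈ S, (k : ℕ) = (i : ℕ) + 1 then 1 else 0) := by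
  intro S
  induction S using Finset.induction_on with
  | empty =>
    intro A hA i j hij
    simp [foldS_empty]
  | @insert a S ha ih =>
    intro A hA i j hij
    rw [foldS_insert ha, g_of_upper hA.1,
      ih (Phi2 A a) (delta_phi2 hA a) i j hij, secdiag_phi2 hA hij a]
    by_cases hai : (a : ℕ) = (i : ℕ) + 1
    · have h2 : ¬ ∃ k ∈ S, (k : ℕ) = (i : ℕ) + 1 := by
        rintro ⟨k, hk, hkv⟩
        have : k = a := Fin.val_injective (hkv.trans hai.symm)
        exact ha (this ▸ hk)
      have h3 : ∃ k ∈ insert a S, (k : ℕ) = (i : ℕ) + 1 :=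
        ⟨a, Finset.mem_insert_self _ _, hai⟩
      rw [if_pos hai, if_neg h2, if_pos h3, add_zero]
    · have h4 : (∃ k ∈ insert a S, (k : ℕ) = (i : ℕ) + 1)
          ↔ (∃ k ∈ S, (k : ℕ) = (i : ℕ) + 1) := by
        constructor
        · rintro ⟨k, hk, hv⟩
          rcases Finset.mem_insert.1 hk with rfl | hk'
          · exact absurd hv hai
          · exact ⟨k, hk', hv⟩
        · rintro ⟨k, hk, hv⟩
          exact ⟨k, Finset.mem_insert_of_mem hk, hv⟩
      rw [if_neg hai, add_zero, if_congr h4 rfl rfl]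

instance midDec (A : Mx n) (k : Fin n) : Decidable (∃ i j : Fin n,
    (j : ℕ) = (i : ℕ) + 2 ∧ (k : ℕ) = (i : ℕ) + 1 ∧ A i j = 1) :=
  @Fintype.decidableExistsFintype _ _ (fun i => Fintype.decidableExistsFintype) _

/-- The set of "middle" indices where the second superdiagonal is nonzero. -/
def midS (A : Mx n) : Finset (Fin n) :=
  Finset.univ.filter (fun k => ∃ i j : Fin n,
    (j : ℕ) = (i : ℕ) + 2 ∧ (k : ℕ) = (i : ℕ) + 1 ∧ A i j = 1)

/-- The normal form. -/
noncomputable def nf (A : Mx n) : Mx n := foldS (midS A) A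

lemma nf_delta {A : Mx n} (hA : InDelta A) : InDelta (nf A) :=
  delta_foldl _ _ hA

lemma nf_equiv {A : Mx n} (hA : InDelta A) : Phi2Equiv A (nf A) :=
  equiv_foldl _ _ hA.1

lemma zmod2_cases (x : ZMod 2) : x = 0 ∨ x = 1 := by revert x; decide

lemma nf_secdiag {A : Mx n} (hA : InDelta A) :
    ∀ i j : Fin n, (j : ℕ) = (i : ℕ) + 2 → nf A i j = 0 := by
  intro i j hij
  rw [nf, foldS_secdiag _ A hA i j hij]
  rcases zmod2_cases (A i j) with h0 | h1
  · have hne : ¬ ∃ k ∈ midS A, (k : ℕ) = (i : ℕ) + 1 := by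
      rintro ⟨k, hk, hkv⟩
      rw [midS, Finset.mem_filter] at hk
      obtain ⟨-, i', j', hj', hk', h1⟩ := hk
      have hi : i' = i := Fin.val_injective (by omega)
      have hj : j' = j := Fin.val_injective (by omega)
      rw [hi, hj] at h1
      rw [h1] at h0
      exact absurd h0 (by decide)
    rw [if_neg hne, h0, add_zero]
  · have hj : (j : ℕ) < n := j.isLt
    have hmem : ∃ k ∈ midS A, (k : ℕ) = (i : ℕ) + 1 := by
      refine ⟨⟨(i : ℕ) + 1, by omega⟩, ?_, rfl⟩
      rw [midS, Finset.mem_filter]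
      exact ⟨Finset.mem_univ _, i, j, hij, rfl, h1⟩
    rw [if_pos hmem, h1]
    decide

lemma equiv_chain (hn : 2 ≤ n) {A B : Mx n} (h : Phi2Equiv A B) :
    (InDelta A → InDelta B ∧ ∃ l : List (Fin n), B = l.foldl g A) ∧
    (InDelta B → InDelta A ∧ ∃ l : List (Fin n), A = l.foldl g B) := by
  induction h with
  | rel A B hr =>
    obtain ⟨k, rfl⟩ := hr
    constructor
    · intro hA
      refine ⟨delta_phi2 hA k, [k], ?_⟩
      show Phi2 A k = g A k
      rw [g_of_upper hA.1]
    · intro hB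
      have h01 : ∀ x : ZMod 2, x ≠ 0 → x = 1 := by decide
      have hkk : A k k = 0 := by
        by_contra hne
        have hk1 : A k k = 1 := h01 _ hne
        have hrow : ∀ j, Phi2 A k k j = 0 := by
          intro j
          show A k j + A k j * A k k = 0
          rw [hk1]
          have : ∀ x : ZMod 2, x + x * 1 = 0 := by decide
          exact this _
        have hcol : ∀ i, Phi2 A k i k = 0 := by
          intro i
          show A i k + A k k * A i k = 0
          rw [hk1]
          have : ∀ x : ZMod 2, x + 1 * x = 0 := by decide
          exact this _
        rcases lt_or_ge ((k : ℕ) + 1) n with h | h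
        · have h1 := hB.2 k ⟨(k : ℕ) + 1, h⟩ rfl
          rw [hrow] at h1
          exact absurd h1 (by decide)
        · have hk0 : 0 < (k : ℕ) := by have := k.isLt; omega
          have h1 := hB.2 ⟨(k : ℕ) - 1, by omega⟩ k (by simp; omega)
          rw [hcol] at h1
          exact absurd h1 (by decide)
      have hAeq : Phi2 (Phi2 A k) k = A := invol hkk
      have hAd : InDelta A := by rw [← hAeq]; exact delta_phi2 hB k
      refine ⟨hAd, [k], ?_⟩
      show A = g (Phi2 A k) k
      rw [g_of_upper hB.1, hAeq]
  | refl A =>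
    exact ⟨fun h => ⟨h, [], rfl⟩, fun h => ⟨h, [], rfl⟩⟩
  | symm A B h ih =>
    exact ⟨ih.2, ih.1⟩
  | trans A B C hab hbc ih1 ih2 =>
    constructor
    · intro hA
      obtain ⟨hB, l1, e1⟩ := ih1.1 hA
      obtain ⟨hC, l2, e2⟩ := ih2.1 hB
      exact ⟨hC, l1 ++ l2, by rw [List.foldl_append, ← e1, ← e2]⟩
    · intro hC
      obtain ⟨hB, l2, e2⟩ := ih2.2 hC
      obtain ⟨hA, l1, e1⟩ := ih1.2 hB
      exact ⟨hA, l2 ++ l1, by rw [List.foldl_append, ← e2, ← e1]⟩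

lemma normal_unique (hn : 2 ≤ n) {A B : Mx n} (hA : InDelta A) (hB : InDelta B)
    (nA : ∀ i j : Fin n, (j : ℕ) = (i : ℕ) + 2 → A i j = 0)
    (nB : ∀ i j : Fin n, (j : ℕ) = (i : ℕ) + 2 → B i j = 0)
    (h : Phi2Equiv A B) : A = B := by
  obtain ⟨-, l, hl⟩ := (equiv_chain hn h).1 hA
  obtain ⟨S, hS, hfold⟩ := word_to_set l A hA
  have hBS : B = foldS S A := by rw [hl, hfold]
  have hSe : S = ∅ := by
    rw [Finset.eq_empty_iff_forall_notMem]
    intro k hk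
    obtain ⟨hk0, hk1⟩ := hS k hk
    set i : Fin n := ⟨(k : ℕ) - 1, by omega⟩
    set j : Fin n := ⟨(k : ℕ) + 1, hk1⟩
    have hij : (j : ℕ) = (i : ℕ) + 2 := by simp [i, j]; omega
    have hex : ∃ k' ∈ S, (k' : ℕ) = (i : ℕ) + 1 := ⟨k, hk, by simp [i]; omega⟩
    have := foldS_secdiag S A hA i j hij
    rw [← hBS, nA i j hij, nB i j hij, if_pos hex, zero_add] at this
    exact absurd this (by decide)
  rw [hBS, hSe, foldS_empty]


/-- Normal forms: `Δ(n)` matrices with vanishing second superdiagonal. -/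
def NF (n : ℕ) :=
  {M : Mx n // InDelta M ∧ ∀ i j : Fin n, (j : ℕ) = (i : ℕ) + 2 → M i j = 0}

noncomputable def quotEquiv (hn : 2 ≤ n) :
    Quot (fun A B : {M : Mx n // InDelta M} => Phi2Equiv A.1 B.1) ≃ NF n where
  toFun := Quot.lift (fun A => (⟨nf A.1, nf_delta A.2, nf_secdiag A.2⟩ : NF n))
    (fun A B hAB => Subtype.ext (normal_unique hn (nf_delta A.2) (nf_delta B.2)
      (nf_secdiag A.2) (nf_secdiag B.2)
      (Relation.EqvGen.trans _ _ _ (Relation.EqvGen.symm _ _ (nf_equiv A.2))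
        (Relation.EqvGen.trans _ _ _ hAB (nf_equiv B.2)))))
  invFun := fun M => Quot.mk _ ⟨M.1, M.2.1⟩
  left_inv := by
    intro q
    induction q using Quot.ind with
    | _ A => exact Quot.sound (Relation.EqvGen.symm _ _ (nf_equiv A.2))
  right_inv := by
    intro M
    apply Subtype.ext
    exact normal_unique hn (nf_delta M.2.1) M.2.1 (nf_secdiag M.2.1) M.2.2
      (Relation.EqvGen.symm _ _ (nf_equiv M.2.1))

def nfEquivFun :
    NF n ≃ ({p : Fin n × Fin n // (p.1 : ℕ) + 3 ≤ (p.2 : ℕ)} → ZMod 2) where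
  toFun M p := M.1 p.1.1 p.1.2
  invFun f := ⟨fun i j => if h : (i : ℕ) + 3 ≤ (j : ℕ) then f ⟨(i, j), h⟩
      else if (j : ℕ) = (i : ℕ) + 1 then 1 else 0, by
    refine ⟨⟨?_, ?_⟩, ?_⟩
    · intro i j hji
      rw [Fin.le_def] at hji
      show (if h : (i : ℕ) + 3 ≤ (j : ℕ) then f ⟨(i, j), h⟩
        else if (j : ℕ) = (i : ℕ) + 1 then 1 else 0) = 0
      rw [dif_neg (by omega), if_neg (by omega)]
    · intro i j hij
      show (if h : (i : ℕ) + 3 ≤ (j : ℕ) then f ⟨(i, j), h⟩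
        else if (j : ℕ) = (i : ℕ) + 1 then 1 else 0) = 1
      rw [dif_neg (by omega), if_pos hij]
    · intro i j hij
      show (if h : (i : ℕ) + 3 ≤ (j : ℕ) then f ⟨(i, j), h⟩
        else if (j : ℕ) = (i : ℕ) + 1 then 1 else 0) = 0
      rw [dif_neg (by omega), if_neg (by omega)]⟩
  left_inv := fun M => Subtype.ext (by
    funext i j
    show (if h : (i : ℕ) + 3 ≤ (j : ℕ) then M.1 i j
      else if (j : ℕ) = (i : ℕ) + 1 then 1 else 0) = M.1 i j
    by_cases h : (i : ℕ) + 3 ≤ (j : ℕ)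
    · rw [dif_pos h]
    · rw [dif_neg h]
      by_cases h2 : (j : ℕ) = (i : ℕ) + 1
      · rw [if_pos h2, M.2.1.2 i j h2]
      · rw [if_neg h2]
        rcases (by omega : (j : ℕ) ≤ (i : ℕ) ∨ (j : ℕ) = (i : ℕ) + 2) with h3 | h3
        · rw [M.2.1.1 i j (by rw [Fin.le_def]; omega)]
        · rw [M.2.2 i j h3])
  right_inv := fun f => funext fun p => by
    show (if h : (p.1.1 : ℕ) + 3 ≤ (p.1.2 : ℕ) then f ⟨(p.1.1, p.1.2), h⟩
      else if (p.1.2 : ℕ) = (p.1.1 : ℕ) + 1 then 1 else 0) = f p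
    rw [dif_pos p.2]

def subtypeLeEquiv (c : ℕ) : {j : Fin n // c ≤ (j : ℕ)} ≃ Fin (n - c) where
  toFun j := ⟨(j : ℕ) - c, by have := j.1.isLt; have := j.2; omega⟩
  invFun m := ⟨⟨(m : ℕ) + c, by have := m.isLt; omega⟩, Nat.le_add_left c m⟩
  left_inv j := Subtype.ext (Fin.ext (by have := j.2; simp; omega))
  right_inv m := Fin.ext (by simp)

lemma natsum (n : ℕ) :
    ∑ i ∈ Finset.range n, (n - (i + 3)) = (n - 2) * (n - 3) / 2 := by
  set m := n - 3 with hm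
  have h1 : ∑ i ∈ Finset.range n, (n - (i + 3))
      = ∑ i ∈ Finset.range m, (n - (i + 3)) :=
    (Finset.sum_subset (Finset.range_subset_range.2 (by omega)) (fun x hx hnx => by
      simp only [Finset.mem_range] at hx hnx; omega)).symm
  have h2 : ∑ i ∈ Finset.range m, (n - (i + 3)) = ∑ i ∈ Finset.range m, (m - i) :=
    Finset.sum_congr rfl (fun x hx => by simp only [Finset.mem_range] at hx; omega)
  have h3 : ∑ i ∈ Finset.range m, (m - i) = ∑ i ∈ Finset.range (m + 1), i := by
    calc ∑ i ∈ Finset.range m, (m - i)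
        = ∑ i ∈ Finset.range (m + 1), (m - i) := by
          rw [Finset.sum_range_succ, Nat.sub_self, add_zero]
      _ = ∑ i ∈ Finset.range (m + 1), i := by
          simpa using Finset.sum_range_reflect (fun j => j) (m + 1)
  rw [h1, h2, h3, Finset.sum_range_id, Nat.add_sub_cancel]
  rcases le_or_gt 3 n with h | h
  · rw [(by omega : m + 1 = n - 2)]
  · rw [(by omega : m = 0)]
    simp

lemma card_P :
    Fintype.card {p : Fin n × Fin n // (p.1 : ℕ) + 3 ≤ (p.2 : ℕ)}
      = (n - 2) * (n - 3) / 2 := by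
  rw [Fintype.card_congr (Equiv.subtypeProdEquivSigmaSubtype
    (fun (a b : Fin n) => (a : ℕ) + 3 ≤ (b : ℕ))), Fintype.card_sigma]
  have h1 : ∀ i : Fin n, Fintype.card {j : Fin n // (i : ℕ) + 3 ≤ (j : ℕ)}
      = n - ((i : ℕ) + 3) := fun i => by
    rw [Fintype.card_congr (subtypeLeEquiv ((i : ℕ) + 3)), Fintype.card_fin]
  calc ∑ i : Fin n, Fintype.card {j : Fin n // (i : ℕ) + 3 ≤ (j : ℕ)}
      = ∑ i : Fin n, (n - ((i : ℕ) + 3)) := Finset.sum_congr rfl (fun i _ => h1 i)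
    _ = ∑ i ∈ Finset.range n, (n - (i + 3)) :=
        Fin.sum_univ_eq_sum_range (fun i => n - (i + 3)) n
    _ = (n - 2) * (n - 3) / 2 := natsum n

end BottAux


open BottAux in
/-- Every `A ∈ Δ(n)` is equivalent, using only the operations `Φ^k`, to a unique
matrix `Ā ∈ Δ(n)` with `Ā^i_{i+2} = 0` for all `i`; consequently there are exactly
`2^((n-2)(n-3)/2)` Bott equivalence classes in `Δ(n)` for `n ≥ 2`. -/
theorem stmt16 {n : ℕ} (hn : 2 ≤ n) :
    (∀ A : Matrix (Fin n) (Fin n) (ZMod 2), InDelta A →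
      ∃! Abar : Matrix (Fin n) (Fin n) (ZMod 2),
        InDelta Abar ∧ (∀ i j : Fin n, (j : ℕ) = (i : ℕ) + 2 → Abar i j = 0) ∧
        Phi2Equiv A Abar) ∧
    Nat.card (Quot (fun A B : {M : Matrix (Fin n) (Fin n) (ZMod 2) // InDelta M} =>
        Phi2Equiv A.1 B.1)) = 2 ^ ((n - 2) * (n - 3) / 2) := by
  constructor
  · intro A hA
    refine ⟨nf A, ⟨nf_delta hA, nf_secdiag hA, nf_equiv hA⟩, ?_⟩
    rintro B ⟨hBd, hBn, hBe⟩
    exact normal_unique hn hBd (nf_delta hA) hBn (nf_secdiag hA)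
      (Relation.EqvGen.trans _ _ _ (Relation.EqvGen.symm _ _ hBe) (nf_equiv hA))
  · rw [Nat.card_congr (quotEquiv hn), Nat.card_congr (nfEquivFun (n := n)),
      Nat.card_eq_fintype_card, Fintype.card_fun, ZMod.card 2, card_P]
end
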